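/- arXiv:1507.01655 — 5 statements merged into one kernel-verified Lean document; each statement's English description precedes it below -/
import Mathlib

section
/- Let K be an abstract simplicial complex that is pure of dimension d, and suppose the intervals [G_F, F], one for each facet F, form a partition of K. Then for every k with 0 ≤ k ≤ d+1, the h-vector component satisfies h_k(K) = |{F : F is a facet of K and |G_F| = k}|. -/
open Finset

lemma key_sum_aux (n r : ℕ) (hr : r ≤ n) :
    ∑ j ∈ range (n + 1), (n.choose j) •
      (if j ≤ r then (-1 : ℤ) ^ (r - j) * ((n - j).choose (n - r) : ℤ) else 0)
      = if r = 0 then 1 else 0 := by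
  rw [← Finset.sum_subset (Finset.range_subset_range.mpr (Nat.add_le_add_right hr 1))
      (fun j _ hj => by
        rw [if_neg (by simpa [Nat.lt_succ_iff] using hj), smul_zero])]
  have h1 : ∀ j ∈ range (r + 1),
      (n.choose j) • (if j ≤ r then (-1 : ℤ) ^ (r - j) * ((n - j).choose (n - r) : ℤ) else 0)
      = (n.choose r : ℤ) * ((-1) ^ (r - j) * (r.choose j : ℤ)) := by
    intro j hj
    rw [mem_range, Nat.lt_succ_iff] at hj
    rw [if_pos hj]
    have hs : (n - j).choose (n - r) = (n - j).choose (r - j) := by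
      have h2 : n - r = (n - j) - (r - j) := by omega
      rw [h2, Nat.choose_symm (by omega)]
    have h3 : n.choose r * r.choose j = n.choose j * (n - j).choose (r - j) :=
      Nat.choose_mul hj
    have h4 : ((n.choose r : ℤ)) * (r.choose j : ℤ)
        = (n.choose j : ℤ) * ((n - j).choose (r - j) : ℤ) := by exact_mod_cast h3
    rw [hs, nsmul_eq_mul]
    linear_combination (-(-1 : ℤ) ^ (r - j)) * h4
  rw [Finset.sum_congr rfl h1, ← Finset.mul_sum]
  have h2 : ∑ j ∈ range (r + 1), (-1 : ℤ) ^ (r - j) * (r.choose j : ℤ)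
      = if r = 0 then 1 else 0 := by
    rw [← Int.alternating_sum_range_choose (n := r), ← Finset.sum_range_reflect]
    refine Finset.sum_congr rfl fun j hj => ?_
    rw [mem_range, Nat.lt_succ_iff] at hj
    have : r + 1 - 1 - j = r - j := by omega
    rw [this, Nat.choose_symm hj, Nat.sub_sub_self hj]
  rw [h2]
  split_ifs with h
  · subst h; simp
  · simp



/-- An abstract simplicial complex on a vertex type `V`: a finite collection of finite
subsets of `V` (the faces) containing the empty set and closed under taking subsets. -/
structure FinAbstractSimplicialComplex (V : Type*) [DecidableEq V] where
  faces : Finset (Finset V)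
  empty_mem : ∅ ∈ faces
  down_closed : ∀ ⦃s t : Finset V⦄, s ∈ faces → t ⊆ s → t ∈ faces

/-- Let `K` be an abstract simplicial complex, pure of dimension `d`, and
suppose the intervals `[G F, F]` (one for each facet `F`) form a partition of `K`. Then for
every `0 ≤ k ≤ d+1`, the `h`-vector component
`h_k(K) = ∑_{i=0}^{k} (-1)^{k-i} C(d+1-i, d+1-k) f_{i-1}(K)`
(where `f_{i-1}(K)` is the number of faces of cardinality `i`) equals the number of facets
`F` with `|G F| = k`. -/
theorem h_vector_eq_partition_count {V : Type*} [DecidableEq V]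
    (K : FinAbstractSimplicialComplex V) (d : ℕ)
    (hpure : ∀ s ∈ K.faces, ∃ F ∈ K.faces, s ⊆ F ∧ F.card = d + 1)
    (G : Finset V → Finset V)
    (hG : ∀ F ∈ K.faces, F.card = d + 1 → G F ⊆ F)
    (hpart : ∀ s ∈ K.faces,
      ∃! F : Finset V, F ∈ K.faces ∧ F.card = d + 1 ∧ G F ⊆ s ∧ s ⊆ F) :
    ∀ k ≤ d + 1,
      (∑ i ∈ Finset.range (k + 1), (-1 : ℤ) ^ (k - i) * ((d + 1 - i).choose (d + 1 - k)) *
          ((K.faces.filter fun s => s.card = i).card : ℤ))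
        = ((K.faces.filter fun F => F.card = d + 1 ∧ (G F).card = k).card : ℤ) := by
  intro k hk
  classical
  set c : ℕ → ℤ := fun i => (-1 : ℤ) ^ (k - i) * ((d + 1 - i).choose (d + 1 - k)) with hc
  set w : Finset V → ℤ := fun s => if s.card ≤ k then c s.card else 0 with hw
  -- the choice function assigning to each face its unique facet
  set φ : Finset V → Finset V :=
    fun s => if h : s ∈ K.faces then (hpart s h).choose else ∅ with hφdef
  have hφ : ∀ s ∈ K.faces,
      φ s ∈ K.faces ∧ (φ s).card = d + 1 ∧ G (φ s) ⊆ s ∧ s ⊆ φ s := by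
    intro s hs
    simp only [hφdef, dif_pos hs]
    exact (hpart s hs).choose_spec.1
  have hφu : ∀ s ∈ K.faces, ∀ F : Finset V,
      (F ∈ K.faces ∧ F.card = d + 1 ∧ G F ⊆ s ∧ s ⊆ F) → φ s = F := by
    intro s hs F hF
    simp only [hφdef, dif_pos hs]
    exact ((hpart s hs).choose_spec.2 F hF).symm
  -- Step A : rewrite LHS as sum of weights over all faces
  have stepA : (∑ i ∈ Finset.range (k + 1),
        (-1 : ℤ) ^ (k - i) * ((d + 1 - i).choose (d + 1 - k)) *
          ((K.faces.filter fun s => s.card = i).card : ℤ))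
      = ∑ s ∈ K.faces, w s := by
    have h1 : ∀ i ∈ range (k + 1),
        (-1 : ℤ) ^ (k - i) * ((d + 1 - i).choose (d + 1 - k)) *
          ((K.faces.filter fun s => s.card = i).card : ℤ)
        = ∑ s ∈ K.faces, if s.card = i then c i else 0 := by
      intro i _
      rw [← Finset.sum_filter, Finset.sum_const, nsmul_eq_mul, hc]
      ring
    rw [Finset.sum_congr rfl h1, Finset.sum_comm]
    refine Finset.sum_congr rfl fun s _ => ?_
    rw [Finset.sum_ite_eq (range (k + 1)) s.card c, hw]
    simp [Nat.lt_succ_iff]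
  rw [stepA]
  -- Step C : group faces by their facet
  rw [← Finset.sum_fiberwise_of_maps_to (g := φ)
      (t := K.faces.filter fun F => F.card = d + 1)
      (fun s hs => Finset.mem_filter.mpr ⟨(hφ s hs).1, (hφ s hs).2.1⟩) w]
  -- RHS as sum of indicators
  have hRHS : ((K.faces.filter fun F => F.card = d + 1 ∧ (G F).card = k).card : ℤ)
      = ∑ F ∈ K.faces.filter fun F => F.card = d + 1,
          (if (G F).card = k then (1 : ℤ) else 0) := by
    rw [Finset.sum_boole, Finset.filter_filter]
  rw [hRHS]
  refine Finset.sum_congr rfl fun F hF => ?_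
  rw [Finset.mem_filter] at hF
  obtain ⟨hFf, hFc⟩ := hF
  have hGF : G F ⊆ F := hG F hFf hFc
  have hg : (G F).card ≤ d + 1 := hFc ▸ Finset.card_le_card hGF
  -- Step D : the fiber is the interval [G F, F]
  have hfiber : K.faces.filter (fun s => φ s = F)
      = (F \ G F).powerset.image (fun t => G F ∪ t) := by
    ext s
    simp only [Finset.mem_filter, Finset.mem_image, Finset.mem_powerset]
    constructor
    · rintro ⟨hs, hφs⟩
      have h := hφ s hs
      rw [hφs] at h
      exact ⟨s \ G F, Finset.sdiff_subset_sdiff h.2.2.2 subset_rfl,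
        Finset.union_sdiff_of_subset h.2.2.1⟩
    · rintro ⟨t, ht, rfl⟩
      have hsub : G F ∪ t ⊆ F :=
        Finset.union_subset hGF (ht.trans Finset.sdiff_subset)
      have hs : G F ∪ t ∈ K.faces := K.down_closed hFf hsub
      exact ⟨hs, hφu _ hs F ⟨hFf, hFc, Finset.subset_union_left, hsub⟩⟩
  rw [hfiber, Finset.sum_image (fun t₁ h₁ t₂ h₂ he => by
    rw [Finset.mem_coe, Finset.mem_powerset] at h₁ h₂
    have d₁ : Disjoint (G F) t₁ := (Finset.disjoint_sdiff : Disjoint (G F) (F \ G F)).mono_right h₁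
    have d₂ : Disjoint (G F) t₂ := (Finset.disjoint_sdiff : Disjoint (G F) (F \ G F)).mono_right h₂
    rw [← Finset.union_sdiff_cancel_left d₁, he, Finset.union_sdiff_cancel_left d₂])]
  -- Step E : inner sum depends only on cardinality
  have hcard : ∀ t ∈ (F \ G F).powerset, w (G F ∪ t)
      = (fun j => if (G F).card + j ≤ k then c ((G F).card + j) else 0) t.card := by
    intro t ht
    rw [Finset.mem_powerset] at ht
    have hd : Disjoint (G F) t := (Finset.disjoint_sdiff : Disjoint (G F) (F \ G F)).mono_right ht
    rw [hw]
    simp only [Finset.card_union_of_disjoint hd]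
  rw [Finset.sum_congr rfl hcard, Finset.sum_powerset_apply_card
      (f := fun j => if (G F).card + j ≤ k then c ((G F).card + j) else 0)]
  have hn : (F \ G F).card = d + 1 - (G F).card := by
    rw [Finset.card_sdiff_of_subset hGF, hFc]
  rw [hn]
  set g := (G F).card with hgdef
  by_cases hgk : g ≤ k
  · have hr : k - g ≤ d + 1 - g := by omega
    have := key_sum_aux (d + 1 - g) (k - g) hr
    have hmatch : ∀ j ∈ range (d + 1 - g + 1),
        ((d + 1 - g).choose j) • (if g + j ≤ k then c (g + j) else 0)
        = ((d + 1 - g).choose j) •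
            (if j ≤ k - g then (-1 : ℤ) ^ (k - g - j) *
              (((d + 1 - g - j).choose (d + 1 - g - (k - g))) : ℤ) else 0) := by
      intro j _
      congr 1
      by_cases hj : g + j ≤ k
      · rw [if_pos hj, if_pos (by omega), hc]
        have e1 : k - (g + j) = k - g - j := by omega
        have e2 : d + 1 - (g + j) = d + 1 - g - j := by omega
        have e3 : d + 1 - k = d + 1 - g - (k - g) := by omega
        simp only [e1, e2, e3]
      · rw [if_neg hj, if_neg (by omega)]
    rw [Finset.sum_congr rfl hmatch, this]
    have : (k - g = 0) ↔ (g = k) := by omega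
    simp [this]
  · have hz : ∀ j ∈ range (d + 1 - g + 1),
        ((d + 1 - g).choose j) • (if g + j ≤ k then c (g + j) else 0) = 0 := by
      intro j _
      rw [if_neg (by omega), smul_zero]
    rw [Finset.sum_congr rfl hz, Finset.sum_const_zero, if_neg (by omega)]
end

section
/- Let K be an abstract simplicial complex that is pure of dimension d, and suppose the intervals [G_F, F], one for each facet F, form a partition of K. Then for every i with -1 ≤ i ≤ d, the number of faces of K of cardinality i+1 equals Σ_F C(d+1-|G_F|, i+1-|G_F|), the sum ranging over all facets F of K, where C(a,b) denotes the binomial coefficient (interpreted as 0 when b < 0 or b > a). -/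
/-- An abstract simplicial complex on a vertex type `V`: a finite collection of finite
subsets of `V` (the faces) containing the empty set and closed under taking subsets. -/
structure AbstractSimplicialComplex' (V : Type*) [DecidableEq V] where
  faces : Finset (Finset V)
  empty_mem : ∅ ∈ faces
  down_closed : ∀ ⦃s t : Finset V⦄, s ∈ faces → t ⊆ s → t ∈ faces


open Finset

lemma interval_count {V : Type*} [DecidableEq V] (g F : Finset V) (hg : g ⊆ F) (j : ℕ) :
    ((F.powerset.filter fun s => g ⊆ s ∧ s.card = j)).card
      = if g.card ≤ j then (F.card - g.card).choose (j - g.card) else 0 := by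
  split_ifs with h
  · rw [← card_sdiff_of_subset hg, ← Finset.card_powersetCard]
    apply Finset.card_bij (fun s _ => s \ g)
    · rintro s hs
      simp only [mem_filter, mem_powerset] at hs
      obtain ⟨hsF, hgs, hcard⟩ := hs
      rw [mem_powersetCard]
      constructor
      · exact sdiff_subset_sdiff hsF Subset.rfl
      · rw [card_sdiff_of_subset hgs, hcard]
    · rintro s hs t ht hst
      simp only [mem_filter, mem_powerset] at hs ht
      have : s \ g ∪ g = t \ g ∪ g := by rw [hst]
      rwa [sdiff_union_of_subset hs.2.1, sdiff_union_of_subset ht.2.1] at this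
    · rintro t ht
      rw [mem_powersetCard] at ht
      refine ⟨t ∪ g, ?_, ?_⟩
      · simp only [mem_filter, mem_powerset]
        refine ⟨union_subset (ht.1.trans sdiff_subset) hg, subset_union_right, ?_⟩
        rw [card_union_of_disjoint, ht.2]
        · omega
        · exact Disjoint.mono_left ht.1 sdiff_disjoint
      · rw [union_sdiff_right, sdiff_eq_self_of_disjoint (Disjoint.mono_left ht.1 sdiff_disjoint)]
  · rw [Finset.card_eq_zero, filter_eq_empty_iff]
    rintro s hs ⟨hgs, hcard⟩
    exact h (hcard ▸ card_le_card hgs)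

/-- Let `K` be an abstract simplicial complex, pure of dimension `d`, with a
partition given by the intervals `[G F, F]` over the facets `F`. Then for every `i` with
`-1 ≤ i ≤ d` (below `j = i + 1`, so `0 ≤ j ≤ d+1`), the number of faces of `K` of
cardinality `i+1` equals `∑_F C(d+1-|G F|, i+1-|G F|)`, the sum ranging over the facets `F`,
where the binomial coefficient is interpreted as `0` when its lower index is negative or
exceeds the upper index. -/
theorem face_count_eq_sum_over_facets {V : Type*} [DecidableEq V]
    (K : AbstractSimplicialComplex' V) (d : ℕ)
    (hpure : ∀ s ∈ K.faces, ∃ F ∈ K.faces, s ⊆ F ∧ F.card = d + 1)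
    (G : Finset V → Finset V)
    (hG : ∀ F ∈ K.faces, F.card = d + 1 → G F ⊆ F)
    (hpart : ∀ s ∈ K.faces,
      ∃! F : Finset V, F ∈ K.faces ∧ F.card = d + 1 ∧ G F ⊆ s ∧ s ⊆ F) :
    ∀ j ≤ d + 1,
      (K.faces.filter fun s => s.card = j).card
        = ∑ F ∈ K.faces.filter fun F => F.card = d + 1,
            if (G F).card ≤ j then (d + 1 - (G F).card).choose (j - (G F).card) else 0 := by
  intro j hj
  classical
  set f : Finset V → Finset V := fun s =>
    if h : s ∈ K.faces then (hpart s h).choose else ∅ with hf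
  have hfspec : ∀ s (h : s ∈ K.faces),
      (f s ∈ K.faces ∧ (f s).card = d + 1 ∧ G (f s) ⊆ s ∧ s ⊆ f s) ∧
      ∀ F, (F ∈ K.faces ∧ F.card = d + 1 ∧ G F ⊆ s ∧ s ⊆ F) → F = f s := by
    intro s h
    simp only [hf, dif_pos h]
    exact (hpart s h).choose_spec
  rw [Finset.card_eq_sum_card_fiberwise (f := f)
    (t := K.faces.filter fun F => F.card = d + 1) (fun s hs => by
      rw [Finset.mem_coe, Finset.mem_filter] at hs ⊢
      exact ⟨(hfspec s hs.1).1.1, (hfspec s hs.1).1.2.1⟩)]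
  apply Finset.sum_congr rfl
  intro F hF
  rw [Finset.mem_filter] at hF
  obtain ⟨hF1, hF2⟩ := hF
  have hkey : ((K.faces.filter fun s => s.card = j).filter fun s => f s = F)
      = F.powerset.filter fun s => G F ⊆ s ∧ s.card = j := by
    ext s
    simp only [Finset.mem_filter, Finset.mem_powerset]
    constructor
    · rintro ⟨⟨hs, hcard⟩, hfs⟩
      have := (hfspec s hs).1
      rw [hfs] at this
      exact ⟨this.2.2.2, this.2.2.1, hcard⟩
    · rintro ⟨hsF, hGs, hcard⟩
      have hs : s ∈ K.faces := K.down_closed hF1 hsF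
      exact ⟨⟨hs, hcard⟩, ((hfspec s hs).2 F ⟨hF1, hF2, hGs, hsF⟩).symm⟩
  rw [hkey, interval_count (G F) F (hG F hF1 hF2) j, hF2]
end

section
/- Let K be an abstract simplicial complex that is pure of dimension d ≥ 1 and partitionable, let v be a vertex contained in every facet of K, and suppose the link of v in K, namely link(v,K) = {s : v ∉ s and s ∪ {v} ∈ K}, has Euler characteristic 1, i.e., Σ_{i≥0} (-1)^i · f_i(link(v,K)) = 1. Then h_d(K) = 0. -/
/-- The link of a vertex `v` in `K`: the collection of faces `s` with `v ∉ s` and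
`s ∪ {v} ∈ K` (such an `s` is automatically a face of `K`, by downward closure). -/
def link {V : Type*} [DecidableEq V] (K : AbstractSimplicialComplex' V) (v : V) :
    Finset (Finset V) :=
  K.faces.filter fun s => v ∉ s ∧ insert v s ∈ K.faces

/-- Let `K` be an abstract simplicial complex, pure of dimension `d ≥ 1`
and partitionable, let `v` be a vertex contained in every facet of `K`, and suppose the link
of `v` in `K` has Euler characteristic `1`, i.e. `∑_{i ≥ 0} (-1)^i f_i(link v K) = 1` (every
face of the link has cardinality at most `d`, so the sum over `0 ≤ i < d` captures all of
its nonempty faces). Then `h_d(K) = 0`, where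
`h_k(K) = ∑_{i=0}^{k} (-1)^{k-i} C(d+1-i, d+1-k) f_{i-1}(K)` with `f_{i-1}` the number of
faces of cardinality `i`. -/
theorem h_d_eq_zero_of_link_euler_char_one {V : Type*} [DecidableEq V]
    (K : AbstractSimplicialComplex' V) (d : ℕ) (hd : 1 ≤ d)
    (hpure : ∀ s ∈ K.faces, ∃ F ∈ K.faces, s ⊆ F ∧ F.card = d + 1)
    (hpartable : ∃ G : Finset V → Finset V,
      (∀ F ∈ K.faces, F.card = d + 1 → G F ⊆ F) ∧
      ∀ s ∈ K.faces,
        ∃! F : Finset V, F ∈ K.faces ∧ F.card = d + 1 ∧ G F ⊆ s ∧ s ⊆ F)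
    (v : V) (hv : ∀ F ∈ K.faces, F.card = d + 1 → v ∈ F)
    (heuler : (∑ i ∈ Finset.range d, (-1 : ℤ) ^ i *
        (((link K v).filter fun s => s.card = i + 1).card : ℤ)) = 1) :
    (∑ i ∈ Finset.range (d + 1), (-1 : ℤ) ^ (d - i) * ((d + 1 - i).choose (d + 1 - d)) *
        ((K.faces.filter fun s => s.card = i).card : ℤ)) = 0 := by
  classical
  -- K is a cone with apex v
  have hcone : ∀ s ∈ K.faces, insert v s ∈ K.faces := by
    intro s hs
    obtain ⟨F, hF, hsF, hcard⟩ := hpure s hs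
    exact K.down_closed hF (Finset.insert_subset (hv F hF hcard) hsF)
  set L : ℕ → ℤ := fun j => (((link K v).filter fun s => s.card = j).card : ℤ) with hL
  set N : ℕ → ℤ := fun j => ((K.faces.filter fun s => s.card = j).card : ℤ) with hN
  have hL0 : L 0 = 1 := by
    have : ((link K v).filter fun s => s.card = 0) = {∅} := by
      ext s
      simp only [Finset.mem_filter, Finset.card_eq_zero, Finset.mem_singleton, link]
      constructor
      · rintro ⟨_, h⟩; exact h
      · rintro rfl
        exact ⟨⟨K.empty_mem, by simp, hcone ∅ K.empty_mem⟩, rfl⟩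
    show (((link K v).filter fun s => s.card = 0).card : ℤ) = 1
    rw [this, Finset.card_singleton]
    norm_num
  have hN0 : N 0 = 1 := by
    have : (K.faces.filter fun s => s.card = 0) = {∅} := by
      ext s
      simp only [Finset.mem_filter, Finset.card_eq_zero, Finset.mem_singleton]
      constructor
      · rintro ⟨_, h⟩; exact h
      · rintro rfl; exact ⟨K.empty_mem, rfl⟩
    show ((K.faces.filter fun s => s.card = 0).card : ℤ) = 1
    rw [this, Finset.card_singleton]
    norm_num
  -- the f-vector recursion for a cone
  have key : ∀ i : ℕ, N (i + 1) = L (i + 1) + L i := by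
    intro i
    have hsplit :
        ((K.faces.filter fun s => s.card = i + 1).filter fun s => v ∉ s).card
          + ((K.faces.filter fun s => s.card = i + 1).filter fun s => v ∈ s).card
          = (K.faces.filter fun s => s.card = i + 1).card := by
      simpa using Finset.card_filter_add_card_filter_not
        (s := K.faces.filter fun s => s.card = i + 1) (p := fun s => v ∉ s)
    have h1 : ((K.faces.filter fun s => s.card = i + 1).filter fun s => v ∉ s)
        = ((link K v).filter fun s => s.card = i + 1) := by
      ext s
      simp only [Finset.mem_filter, link]
      constructor
      · rintro ⟨⟨hs, hc⟩, hvs⟩; exact ⟨⟨hs, hvs, hcone s hs⟩, hc⟩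
      · rintro ⟨⟨hs, hvs, _⟩, hc⟩; exact ⟨⟨hs, hc⟩, hvs⟩
    have h2 : ((K.faces.filter fun s => s.card = i + 1).filter fun s => v ∈ s).card
        = ((link K v).filter fun s => s.card = i).card := by
      apply Finset.card_bij (fun s _ => s.erase v)
      · rintro s hs
        simp only [Finset.mem_filter, link] at hs ⊢
        obtain ⟨⟨hs, hc⟩, hvs⟩ := hs
        refine ⟨⟨K.down_closed hs (Finset.erase_subset _ _),
          Finset.notMem_erase _ _, ?_⟩, ?_⟩
        · rwa [Finset.insert_erase hvs]
        · rw [Finset.card_erase_of_mem hvs, hc]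
          omega
      · rintro s hs t ht hst
        simp only [Finset.mem_filter] at hs ht
        have := congrArg (insert v) hst
        rwa [Finset.insert_erase hs.2, Finset.insert_erase ht.2] at this
      · rintro t ht
        simp only [Finset.mem_filter, link] at ht
        obtain ⟨⟨hs, hvs, hins⟩, hc⟩ := ht
        refine ⟨insert v t, ?_, ?_⟩
        · simp only [Finset.mem_filter]
          exact ⟨⟨hins, by rw [Finset.card_insert_of_notMem hvs, hc]⟩,
            Finset.mem_insert_self _ _⟩
        · rw [Finset.erase_insert hvs]
    simp only [hN, hL, ← hsplit, h1, h2]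
    push_cast
    try ring
  -- the coefficient function
  set c : ℕ → ℤ := fun j => (-1 : ℤ) ^ (d - j) * ((d + 1 - j : ℕ) : ℤ) with hc
  have hgoal : (∑ i ∈ Finset.range (d + 1), (-1 : ℤ) ^ (d - i) *
      ((d + 1 - i).choose (d + 1 - d)) * N i)
      = ∑ i ∈ Finset.range (d + 1), c i * N i := by
    apply Finset.sum_congr rfl
    intro i _
    have : d + 1 - d = 1 := by omega
    rw [this, Nat.choose_one_right, hc]
    try ring
  rw [hgoal]
  -- coefficient identity
  have hcsum : ∀ i ∈ Finset.range d, c (i + 1) + c (i + 2) = (-1 : ℤ) ^ (d - 1 - i) := by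
    intro i hi
    simp only [Finset.mem_range] at hi
    obtain ⟨k, rfl⟩ : ∃ k, d = i + 1 + k := ⟨d - i - 1, by omega⟩
    rcases k with _ | k
    · simp [hc]
    · have e1 : i + 1 + (k + 1) - (i + 1) = k + 1 := by omega
      have e2 : i + 1 + (k + 1) - (i + 2) = k := by omega
      have e3 : i + 1 + (k + 1) + 1 - (i + 1) = k + 2 := by omega
      have e4 : i + 1 + (k + 1) + 1 - (i + 2) = k + 1 := by omega
      have e5 : i + 1 + (k + 1) - 1 - i = k + 1 := by omega
      simp only [hc, e1, e2, e3, e4, e5]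
      push_cast
      ring
  -- split the main sum
  rw [Finset.sum_range_succ' (fun i => c i * N i) d]
  have hsubst : (∑ i ∈ Finset.range d, c (i + 1) * N (i + 1))
      = ∑ i ∈ Finset.range d, (c (i + 1) * L (i + 1) + c (i + 1) * L i) := by
    apply Finset.sum_congr rfl
    intro i _
    rw [key i]; ring
  rw [hsubst, Finset.sum_add_distrib]
  -- shift the second sum using c (d+1) = 0
  have hcd1 : c (d + 1) = 0 := by simp [hc]
  have hshift : (∑ i ∈ Finset.range d, c (i + 1) * L i)
      = c 1 * L 0 + ∑ i ∈ Finset.range d, c (i + 2) * L (i + 1) := by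
    have := Finset.sum_range_succ (fun i => c (i + 1) * L i) d
    have h2 := Finset.sum_range_succ' (fun i => c (i + 1) * L i) d
    rw [hcd1] at this
    simp only [zero_mul, add_zero] at this
    rw [← this, h2]
    ring
  rw [hshift]
  have hE : (∑ i ∈ Finset.range d, (-1 : ℤ) ^ (d - 1 - i) * L (i + 1))
      = (-1 : ℤ) ^ (d - 1) := by
    have hcongr : ∀ i ∈ Finset.range d, (-1 : ℤ) ^ (d - 1 - i) * L (i + 1)
        = (-1 : ℤ) ^ (d - 1) * ((-1 : ℤ) ^ i * L (i + 1)) := by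
      intro i hi
      simp only [Finset.mem_range] at hi
      have hsq : ((-1 : ℤ)) ^ (i + i) = 1 := Even.neg_one_pow ⟨i, rfl⟩
      have h : (-1 : ℤ) ^ (d - 1 - i) = (-1 : ℤ) ^ (d - 1) * (-1 : ℤ) ^ i := by
        calc (-1 : ℤ) ^ (d - 1 - i) = (-1 : ℤ) ^ (d - 1 - i) * (-1 : ℤ) ^ (i + i) := by
              rw [hsq, mul_one]
          _ = (-1 : ℤ) ^ (d - 1 - i + (i + i)) := by rw [← pow_add]
          _ = (-1 : ℤ) ^ (d - 1 + i) := by congr 1; omega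
          _ = (-1 : ℤ) ^ (d - 1) * (-1 : ℤ) ^ i := by rw [pow_add]
      rw [h]; ring
    rw [Finset.sum_congr rfl hcongr, ← Finset.mul_sum, heuler, mul_one]
  have hS12 : (∑ i ∈ Finset.range d, c (i + 1) * L (i + 1))
      + (∑ i ∈ Finset.range d, c (i + 2) * L (i + 1)) = (-1 : ℤ) ^ (d - 1) := by
    rw [← Finset.sum_add_distrib]
    rw [Finset.sum_congr rfl (fun i hi => by rw [← add_mul, hcsum i hi])]
    exact hE
  have e2 : d - 1 + 1 = d := by omega
  have hc1v : c 1 = (d : ℤ) * (-1 : ℤ) ^ (d - 1) := by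
    simp only [hc]
    have h1 : d + 1 - 1 = d := by omega
    rw [h1]
    ring
  have hc0v : c 0 = -(((d : ℤ) + 1) * (-1 : ℤ) ^ (d - 1)) := by
    simp only [hc, Nat.sub_zero]
    rw [← e2, pow_succ]
    push_cast
    ring
  rw [hN0, hL0, hc0v, hc1v]
  linear_combination hS12
end

section
/- Let K be a geometric simplicial complex in a finite-dimensional real vector space E with finitely many faces, pure of dimension d ≥ 1, whose underlying space |K| is convex. Suppose there is a point v that is a vertex of K contained in every facet of K, and which is an extreme point of |K|. Then h_d(K) = 0 and h_{d+1}(K) = 0. -/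
open Finset Set

noncomputable def ind {α : Type*} (A : Set α) (x : α) : ℤ :=
  by classical exact if x ∈ A then 1 else 0

lemma ind_of_mem {α : Type*} {A : Set α} {x : α} (h : x ∈ A) : ind A x = 1 := by
  simp [ind, h]

lemma ind_of_not_mem {α : Type*} {A : Set α} {x : α} (h : x ∉ A) : ind A x = 0 := by
  simp [ind, h]


/-- `Finset.filter` with classical decidability. -/
noncomputable def nfilter {ι : Type*} (p : ι → Prop) (s : Finset ι) : Finset ι :=
  @Finset.filter ι p (fun i => Classical.propDecidable _) s

lemma nfilter_eq {ι : Type*} (p : ι → Prop) [DecidablePred p] (s : Finset ι) :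
    nfilter p s = s.filter p := by
  rw [nfilter]; convert rfl

/-- 1-dimensional Euler valuation: an integer combination of indicators of nonempty
closed intervals that vanishes identically has vanishing coefficient sum. -/
lemma oneDim_val {ι : Type*} (s : Finset ι) (a b : ι → ℝ) (hab : ∀ i ∈ s, a i ≤ b i)
    (c : ι → ℤ) (h : ∀ t : ℝ, ∑ i ∈ s, c i * ind (Set.Icc (a i) (b i)) t = 0) :
    ∑ i ∈ s, c i = 0 := by
  classical
  have key : ∀ r : ℝ, ∑ i ∈ s.filter (fun i => b i = r), c i = 0 := by
    intro r
    -- find ε > 0 such that no endpoint lies in (r, r+ε]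
    obtain ⟨ε, hε0, hgap⟩ : ∃ ε > 0, ∀ x ∈ s.image a ∪ s.image b, r < x → r + ε < x := by
      set T := (s.image a ∪ s.image b).filter (fun x => r < x) with hT
      by_cases hTne : T.Nonempty
      · refine ⟨(T.min' hTne - r)/2, by
          have := (mem_filter.1 (T.min'_mem hTne)).2; linarith, ?_⟩
        intro x hx hrx
        have hxT : x ∈ T := mem_filter.2 ⟨hx, hrx⟩
        have := T.min'_le x hxT
        have hmin := (mem_filter.1 (T.min'_mem hTne)).2
        linarith
      · refine ⟨1, one_pos, ?_⟩
        intro x hx hrx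
        exact absurd (mem_filter.2 ⟨hx, hrx⟩) (fun hh => hTne ⟨x, hh⟩)
    have hsum := h r
    have hsum2 := h (r + ε)
    have hdiff : ∑ i ∈ s, c i * (ind (Set.Icc (a i) (b i)) r
        - ind (Set.Icc (a i) (b i)) (r + ε)) = 0 := by
      rw [Finset.sum_congr rfl (fun i _ => mul_sub (c i) _ _), Finset.sum_sub_distrib,
        hsum, hsum2, sub_zero]
    have hterm : ∀ i ∈ s, c i * (ind (Set.Icc (a i) (b i)) r
        - ind (Set.Icc (a i) (b i)) (r + ε)) = if b i = r then c i else 0 := by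
      intro i hi
      by_cases hbi : b i = r
      · have h1 : ind (Set.Icc (a i) (b i)) r = 1 :=
          ind_of_mem ⟨hbi ▸ hab i hi, le_of_eq hbi.symm⟩
        have h2 : ind (Set.Icc (a i) (b i)) (r + ε) = 0 := by
          refine ind_of_not_mem (fun hm => ?_)
          have := hm.2; rw [hbi] at this; linarith
        rw [h1, h2, if_pos hbi]; ring
      · rw [if_neg hbi]
        rcases lt_or_gt_of_ne hbi with hlt | hgt
        · have h1 : ind (Set.Icc (a i) (b i)) r = 0 :=
            ind_of_not_mem (fun hm => absurd hm.2 (by linarith))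
          have h2 : ind (Set.Icc (a i) (b i)) (r + ε) = 0 :=
            ind_of_not_mem (fun hm => absurd hm.2 (by linarith))
          rw [h1, h2]; ring
        · have hbigap : r + ε < b i :=
            hgap (b i) (mem_union_right _ (mem_image_of_mem b hi)) hgt
          by_cases har : a i ≤ r
          · have h1 : ind (Set.Icc (a i) (b i)) r = 1 := ind_of_mem ⟨har, le_of_lt hgt⟩
            have h2 : ind (Set.Icc (a i) (b i)) (r + ε) = 1 :=
              ind_of_mem ⟨by linarith, by linarith⟩
            rw [h1, h2]; ring
          · push_neg at har
            have hagap : r + ε < a i :=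
              hgap (a i) (mem_union_left _ (mem_image_of_mem a hi)) har
            have h1 : ind (Set.Icc (a i) (b i)) r = 0 :=
              ind_of_not_mem (fun hm => absurd hm.1 (by linarith))
            have h2 : ind (Set.Icc (a i) (b i)) (r + ε) = 0 :=
              ind_of_not_mem (fun hm => absurd hm.1 (by linarith))
            rw [h1, h2]; ring
    rw [Finset.sum_congr rfl hterm] at hdiff
    rw [Finset.sum_filter]
    exact hdiff
  calc ∑ i ∈ s, c i = ∑ r ∈ s.image b, ∑ i ∈ s.filter (fun i => b i = r), c i := by
        rw [Finset.sum_fiberwise_of_maps_to (fun i hi => mem_image_of_mem b hi)]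
    _ = 0 := by
        rw [Finset.sum_congr rfl (fun r _ => key r)]; simp

/-- compact convex nonempty subset of ℝ is a closed interval -/
lemma compact_convex_real {K : Set ℝ} (hne : K.Nonempty) (hK : IsCompact K)
    (hc : Convex ℝ K) : K = Set.Icc (sInf K) (sSup K) := by
  apply Set.Subset.antisymm
  · exact fun x hx => ⟨csInf_le hK.bddBelow hx, le_csSup hK.bddAbove hx⟩
  · exact hc.ordConnected.out (hK.sInf_mem hne) (hK.sSup_mem hne)

lemma snoc_combo {n : ℕ} (y₁ y₂ : Fin n → ℝ) (t : ℝ) (p q : ℝ) (hpq : p + q = 1) :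
    Fin.snoc (p • y₁ + q • y₂) t = p • (Fin.snoc y₁ t : Fin (n+1) → ℝ)
      + q • (Fin.snoc y₂ t : Fin (n+1) → ℝ) := by
  funext j
  refine Fin.lastCases ?_ (fun j => ?_) j
  · simp only [Pi.add_apply, Pi.smul_apply, Fin.snoc_last, smul_eq_mul]
    rw [← add_mul, hpq, one_mul]
  · simp [Fin.snoc_castSucc]

/-- Euler valuation on `Fin n → ℝ`: an integer combination of indicators of
compact convex sets that vanishes identically has vanishing sum of the coefficients
of the nonempty sets. -/
lemma val_pi : ∀ (n : ℕ) {ι : Type*} (s : Finset ι) (A : ι → Set (Fin n → ℝ))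
    (_ : ∀ i ∈ s, Convex ℝ (A i)) (_ : ∀ i ∈ s, IsCompact (A i)) (c : ι → ℤ)
    (_ : ∀ x, ∑ i ∈ s, c i * ind (A i) x = 0),
    ∑ i ∈ nfilter (fun i => (A i).Nonempty) s, c i = 0 := by
  intro n
  induction n with
  | zero =>
    intro ι s A hconv hcomp c h
    classical
    have h0 := h (fun i => i.elim0)
    rw [nfilter_eq, Finset.sum_filter]
    refine Eq.trans (Finset.sum_congr rfl (fun i _ => ?_)) h0
    by_cases hne : (A i).Nonempty
    · obtain ⟨y, hy⟩ := hne
      have hm : (fun j : Fin 0 => j.elim0) ∈ A i := by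
        have he : (fun j : Fin 0 => j.elim0) = y := Subsingleton.elim _ _
        rw [he]; exact hy
      rw [if_pos ⟨y, hy⟩, ind_of_mem hm, mul_one]
    · rw [if_neg hne, ind_of_not_mem (fun hm => hne ⟨_, hm⟩), mul_zero]
  | succ n IH =>
    intro ι s A hconv hcomp c h
    classical
    -- slices
    set B : ℝ → ι → Set (Fin n → ℝ) :=
      fun t i => (fun y => (Fin.snoc y t : Fin (n+1) → ℝ)) ⁻¹' A i with hB
    have hBconv : ∀ t, ∀ i ∈ s, Convex ℝ (B t i) := by
      intro t i hi y₁ hy₁ y₂ hy₂ p q hp hq hpq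
      have := hconv i hi hy₁ hy₂ hp hq hpq
      simpa [B, Set.mem_preimage, snoc_combo y₁ y₂ t p q hpq] using this
    have hBcomp : ∀ t, ∀ i ∈ s, IsCompact (B t i) := by
      intro t i hi
      have himg : B t i = (fun x : Fin (n+1) → ℝ => x ∘ Fin.castSucc) ''
          (A i ∩ {x | x (Fin.last n) = t}) := by
        ext y
        constructor
        · intro hy
          exact ⟨Fin.snoc y t, ⟨hy, by simp [Fin.snoc_last]⟩, by
            funext j; simp [Fin.snoc_castSucc]⟩
        · rintro ⟨x, ⟨hxA, hxt⟩, rfl⟩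
          have : (Fin.snoc (x ∘ Fin.castSucc) t : Fin (n+1) → ℝ) = x := by
            funext j
            refine Fin.lastCases ?_ (fun j => ?_) j
            · simp only [Fin.snoc_last]; exact hxt.symm
            · simp [Fin.snoc_castSucc]
          simpa [B, Set.mem_preimage, this] using hxA
      rw [himg]
      refine IsCompact.image ((hcomp i hi).inter_right ?_) ?_
      · exact isClosed_eq (continuous_apply _) continuous_const
      · exact continuous_pi (fun j => continuous_apply _)
    have hslice : ∀ t : ℝ, ∑ i ∈ s.filter (fun i => (B t i).Nonempty), c i = 0 := by
      intro t
      rw [← nfilter_eq]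
      refine IH s (B t) (hBconv t) (hBcomp t) c (fun y => ?_)
      have := h (Fin.snoc y t)
      rw [← this]
      exact Finset.sum_congr rfl (fun i _ => by rfl)
    -- interval description
    set S : ι → Set ℝ := fun i => (fun x : Fin (n+1) → ℝ => x (Fin.last n)) '' A i with hS
    have hBS : ∀ t i, (B t i).Nonempty ↔ t ∈ S i := by
      intro t i
      constructor
      · rintro ⟨y, hy⟩
        exact ⟨Fin.snoc y t, hy, by simp [Fin.snoc_last]⟩
      · rintro ⟨x, hxA, hxt⟩
        refine ⟨x ∘ Fin.castSucc, ?_⟩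
        have : (Fin.snoc (x ∘ Fin.castSucc) t : Fin (n+1) → ℝ) = x := by
          funext j
          refine Fin.lastCases ?_ (fun j => ?_) j
          · simp only [Fin.snoc_last]; exact hxt.symm
          · simp [Fin.snoc_castSucc]
        simpa [B, Set.mem_preimage, this] using hxA
    have hScc : ∀ i ∈ s, (A i).Nonempty → S i = Set.Icc (sInf (S i)) (sSup (S i)) := by
      intro i hi hne
      refine compact_convex_real (hne.image _) ((hcomp i hi).image (continuous_apply _)) ?_
      exact (hconv i hi).linear_image (LinearMap.proj (Fin.last n))
    set s' := s.filter (fun i => (A i).Nonempty) with hs'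
    have hfin : ∀ t : ℝ, ∑ i ∈ s', c i * ind (Set.Icc (sInf (S i)) (sSup (S i))) t = 0 := by
      intro t
      have := hslice t
      have heq : s.filter (fun i => (B t i).Nonempty)
          = s'.filter (fun i => t ∈ Set.Icc (sInf (S i)) (sSup (S i))) := by
        ext i
        simp only [hs', Finset.mem_filter, and_assoc]
        constructor
        · intro ⟨his, hBne⟩
          have htS : t ∈ S i := (hBS t i).1 hBne
          have hAne : (A i).Nonempty := by
            obtain ⟨x, hx, _⟩ := htS; exact ⟨x, hx⟩
          exact ⟨his, hAne, by rw [← hScc i his hAne]; exact htS⟩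
        · intro ⟨his, hAne, htI⟩
          refine ⟨his, (hBS t i).2 ?_⟩
          rw [hScc i his hAne]; exact htI
      rw [heq, Finset.sum_filter] at this
      rw [← this]
      refine Finset.sum_congr rfl (fun i _ => ?_)
      by_cases hm : t ∈ Set.Icc (sInf (S i)) (sSup (S i))
      · rw [if_pos hm, ind_of_mem hm, mul_one]
      · rw [if_neg hm, ind_of_not_mem hm, mul_zero]
    rw [nfilter_eq]
    refine oneDim_val s' (fun i => sInf (S i)) (fun i => sSup (S i)) ?_ c hfin
    intro i hi
    simp only [hs', Finset.mem_filter] at hi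
    obtain ⟨his, hne⟩ := hi
    obtain ⟨x, hx⟩ := hne
    have hxS : x (Fin.last n) ∈ S i := ⟨x, hx, rfl⟩
    have hcomp' := (hcomp i his).image (continuous_apply (Fin.last n))
    exact le_trans (csInf_le hcomp'.bddBelow hxS) (le_csSup hcomp'.bddAbove hxS)

/-- Euler valuation for polytopes in an arbitrary finite-dimensional real vector space. -/
lemma val_polytope {E : Type*} [AddCommGroup E] [Module ℝ E] [FiniteDimensional ℝ E]
    {ι : Type*} (s : Finset ι) (P : ι → Finset E) (hne : ∀ i ∈ s, (P i).Nonempty)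
    (c : ι → ℤ) (h : ∀ x : E, ∑ i ∈ s, c i * ind (convexHull ℝ (P i : Set E)) x = 0) :
    ∑ i ∈ s, c i = 0 := by
  classical
  set n := Module.finrank ℝ E with hn
  set e := (Module.finBasis ℝ E).equivFun with he
  set A : ι → Set (Fin n → ℝ) := fun i => convexHull ℝ (e '' (P i : Set E)) with hA
  have hmem : ∀ (i : ι) (x : Fin n → ℝ), x ∈ A i ↔ e.symm x ∈ convexHull ℝ (P i : Set E) := by
    intro i x
    have himg : e '' (convexHull ℝ (P i : Set E)) = A i := by
      rw [hA]
      exact e.toLinearMap.image_convexHull _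
    constructor
    · intro hx
      rw [← himg] at hx
      obtain ⟨y, hy, hyx⟩ := hx
      rwa [← hyx, LinearEquiv.symm_apply_apply]
    · intro hx
      rw [← himg]
      exact ⟨e.symm x, hx, by simp⟩
  have hzero : ∀ x : Fin n → ℝ, ∑ i ∈ s, c i * ind (A i) x = 0 := by
    intro x
    rw [← h (e.symm x)]
    refine Finset.sum_congr rfl (fun i _ => ?_)
    congr 1
    by_cases hx : e.symm x ∈ convexHull ℝ (P i : Set E)
    · rw [ind_of_mem ((hmem i x).2 hx), ind_of_mem hx]
    · rw [ind_of_not_mem (fun hh => hx ((hmem i x).1 hh)), ind_of_not_mem hx]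
  have := val_pi n s A
    (fun i _ => convex_convexHull ℝ _)
    (fun i _ => ((P i).finite_toSet.image e).isCompact_convexHull ℝ)
    c hzero
  rw [nfilter_eq, Finset.filter_true_of_mem] at this
  · exact this
  · intro i hi
    obtain ⟨p, hp⟩ := hne i hi
    exact ⟨e p, subset_convexHull ℝ _ ⟨p, hp, rfl⟩⟩


section Euler

variable {E : Type*} [AddCommGroup E] [Module ℝ E] [DecidableEq E]

/-- intersection of a finite family of finsets -/
def infF (I : Finset (Finset E)) : Finset E :=
  (I.sup id).filter (fun a => ∀ s ∈ I, a ∈ s)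

lemma mem_infF {I : Finset (Finset E)} (hI : I.Nonempty) {a : E} :
    a ∈ infF I ↔ ∀ s ∈ I, a ∈ s := by
  constructor
  · exact fun h => (Finset.mem_filter.1 h).2
  · intro h
    obtain ⟨s₀, hs₀⟩ := hI
    exact Finset.mem_filter.2 ⟨Finset.mem_sup.2 ⟨s₀, hs₀, h s₀ hs₀⟩, h⟩

lemma subset_infF {I : Finset (Finset E)} (hI : I.Nonempty) {T : Finset E} :
    T ⊆ infF I ↔ ∀ s ∈ I, T ⊆ s := by
  constructor
  · intro h s hs x hx
    exact (mem_infF hI).1 (h hx) s hs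
  · intro h x hx
    exact (mem_infF hI).2 (fun s hs => h s hs hx)

lemma alt_sum {X : Type*} [DecidableEq X] {A : Finset X} (hA : A.Nonempty) :
    ∑ I ∈ A.powerset.filter (fun I => I.Nonempty), (-1:ℤ)^(I.card+1) = 1 := by
  have h0 := Finset.sum_powerset_neg_one_pow_card (x := A)
  rw [if_neg (Finset.nonempty_iff_ne_empty.1 hA)] at h0
  have hsplit := Finset.sum_filter_add_sum_filter_not A.powerset
    (fun I => I.Nonempty) (fun I => (-1:ℤ)^I.card)
  have hempty : A.powerset.filter (fun I => ¬ I.Nonempty) = {∅} := by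
    ext I
    simp only [Finset.mem_filter, Finset.mem_powerset, Finset.not_nonempty_iff_eq_empty,
      Finset.mem_singleton]
    constructor
    · rintro ⟨_, h⟩; exact h
    · rintro rfl; exact ⟨Finset.empty_subset A, rfl⟩
  rw [h0, hempty, Finset.sum_singleton, Finset.card_empty, pow_zero] at hsplit
  have h1 : ∑ I ∈ A.powerset.filter (fun I => I.Nonempty), (-1:ℤ)^I.card = -1 := by
    linarith
  calc ∑ I ∈ A.powerset.filter (fun I => I.Nonempty), (-1:ℤ)^(I.card+1)
      = ∑ I ∈ A.powerset.filter (fun I => I.Nonempty), (-1) * (-1:ℤ)^I.card := by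
        refine Finset.sum_congr rfl (fun I _ => ?_)
        rw [pow_succ]; ring
    _ = 1 := by rw [← Finset.mul_sum, h1]; ring

/-- Euler characteristic of a finite "simplicial family" with convex underlying space is 1. -/
lemma euler_family [FiniteDimensional ℝ E]
    (F : Finset (Finset E)) (hFne : F.Nonempty)
    (hne : ∀ s ∈ F, s.Nonempty)
    (hdown : ∀ s ∈ F, ∀ t, t ⊆ s → t.Nonempty → t ∈ F)
    (hinter : ∀ s ∈ F, ∀ t ∈ F, convexHull ℝ (s : Set E) ∩ convexHull ℝ (t : Set E)
      ⊆ convexHull ℝ ((s ∩ t : Finset E) : Set E))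
    (hconv : Convex ℝ (⋃ s ∈ F, convexHull ℝ (s : Set E))) :
    ∑ T ∈ F, (-1:ℤ)^(T.card+1) = 1 := by
  classical
  set V : Finset E := F.sup id with hV
  have hsubV : ∀ s ∈ F, s ⊆ V := by
    intro s hs
    exact Finset.le_sup (f := id) hs
  have hU : (⋃ s ∈ F, convexHull ℝ (s : Set E)) = convexHull ℝ (V : Set E) := by
    apply Set.Subset.antisymm
    · exact Set.iUnion₂_subset (fun s hs => convexHull_mono (hsubV s hs))
    · refine convexHull_min ?_ hconv
      intro x hx
      rw [Finset.mem_coe, hV, Finset.mem_sup] at hx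
      obtain ⟨s, hsF, hxs⟩ := hx
      exact Set.mem_biUnion hsF (subset_convexHull ℝ _ hxs)
  -- C1 : intersections of hulls are hulls of intersections
  have C1 : ∀ I : Finset (Finset E), I ⊆ F → I.Nonempty →
      (⋂ s ∈ I, convexHull ℝ (s : Set E)) = convexHull ℝ ((infF I : Finset E) : Set E) := by
    intro I
    induction I using Finset.induction_on with
    | empty => intro _ h; exact absurd h (by simp)
    | @insert a I ha IH =>
      intro hIF _
      have haF : a ∈ F := hIF (Finset.mem_insert_self a I)
      have hIF' : I ⊆ F := fun s hs => hIF (Finset.mem_insert_of_mem hs)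
      by_cases hI : I.Nonempty
      · have hinfF : infF (insert a I) = a ∩ infF I := by
          ext x
          rw [mem_infF (Finset.insert_nonempty a I), Finset.mem_inter, mem_infF hI]
          simp [Finset.mem_insert]
        have hbi : (⋂ s ∈ insert a I, convexHull ℝ (s : Set E))
            = convexHull ℝ (a : Set E) ∩ ⋂ s ∈ I, convexHull ℝ (s : Set E) := by
          simp [Set.biInter_insert]
        rw [hbi, IH hIF' hI, hinfF]
        by_cases h0 : (infF I).Nonempty
        · have hinfFF : infF I ∈ F := by
            obtain ⟨s₀, hs₀⟩ := id hI
            exact hdown s₀ (hIF' hs₀) (infF I)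
              (fun x hx => (mem_infF hI).1 hx s₀ hs₀) h0
          refine Set.Subset.antisymm (hinter a haF (infF I) hinfFF) ?_
          rw [Finset.coe_inter]
          exact Set.subset_inter
            (convexHull_mono Set.inter_subset_left)
            (convexHull_mono Set.inter_subset_right)
        · rw [Finset.not_nonempty_iff_eq_empty] at h0
          rw [h0, Finset.inter_empty]
          simp
      · rw [Finset.not_nonempty_iff_eq_empty] at hI
        subst hI
        have hinfF : infF (insert a ∅) = a := by
          ext x
          rw [mem_infF (Finset.insert_nonempty a ∅)]
          simp
        rw [hinfF]
        simp
  set P₀ : Finset (Finset (Finset E)) := F.powerset.filter (fun I => I.Nonempty) with hP₀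
  -- pointwise inclusion-exclusion identity
  have hpoint : ∀ x : E, ∑ I ∈ P₀, (-1:ℤ)^(I.card+1) * ind (convexHull ℝ ((infF I : Finset E) : Set E)) x
      = ind (convexHull ℝ (V : Set E)) x := by
    intro x
    set J := F.filter (fun s : Finset E => x ∈ convexHull ℝ (s : Set E)) with hJ
    have hJF : J ⊆ F := Finset.filter_subset _ _
    have step : ∀ I ∈ P₀, (-1:ℤ)^(I.card+1) * ind (convexHull ℝ ((infF I : Finset E) : Set E)) x
        = (-1:ℤ)^(I.card+1) * (if I ⊆ J then 1 else 0) := by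
      intro I hI
      have hIF : I ⊆ F := Finset.mem_powerset.1 (Finset.mem_filter.1 hI).1
      have hInem : I.Nonempty := (Finset.mem_filter.1 hI).2
      congr 1
      by_cases hsub : I ⊆ J
      · rw [if_pos hsub]
        refine ind_of_mem ?_
        rw [← C1 I hIF hInem]
        exact Set.mem_biInter (fun s hs => (Finset.mem_filter.1 (hsub hs)).2)
      · rw [if_neg hsub]
        refine ind_of_not_mem (fun hm => hsub ?_)
        rw [← C1 I hIF hInem] at hm
        intro s hs
        exact Finset.mem_filter.2 ⟨hIF hs, Set.mem_iInter₂.1 hm s hs⟩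
    rw [Finset.sum_congr rfl step]
    simp_rw [mul_ite, mul_one, mul_zero]
    rw [← Finset.sum_filter]
    have hPJ : P₀.filter (fun I => I ⊆ J) = J.powerset.filter (fun I => I.Nonempty) := by
      ext I
      simp only [hP₀, Finset.mem_filter, Finset.mem_powerset]
      constructor
      · rintro ⟨⟨_, hInem⟩, hIJ⟩
        exact ⟨hIJ, hInem⟩
      · rintro ⟨hIJ, hInem⟩
        exact ⟨⟨hIJ.trans hJF, hInem⟩, hIJ⟩
    rw [hPJ]
    by_cases hx : ∃ s ∈ F, x ∈ convexHull ℝ (s : Set E)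
    · obtain ⟨s, hsF, hxs⟩ := hx
      have hJne : J.Nonempty := ⟨s, Finset.mem_filter.2 ⟨hsF, hxs⟩⟩
      rw [alt_sum hJne]
      exact (ind_of_mem (convexHull_mono (hsubV s hsF) hxs)).symm
    · have hJempty : J = ∅ := by
        rw [Finset.filter_eq_empty_iff]
        intro s hs hxs
        exact hx ⟨s, hs, hxs⟩
      rw [hJempty]
      have : (∅ : Finset (Finset E)).powerset.filter (fun I => I.Nonempty) = ∅ := by
        simp [Finset.powerset_empty, Finset.filter_singleton]
      rw [this, Finset.sum_empty]
      refine (ind_of_not_mem ?_).symm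
      intro hm
      rw [← hU] at hm
      obtain ⟨s, hs⟩ := Set.mem_iUnion.1 hm
      obtain ⟨hsF, hxs⟩ := Set.mem_iUnion.1 hs
      exact hx ⟨s, hsF, hxs⟩
  set P₁ : Finset (Finset (Finset E)) := P₀.filter (fun I => (infF I).Nonempty) with hP₁
  -- Euler valuation step
  have hval : ∑ I ∈ P₁, (-1:ℤ)^(I.card+1) = 1 := by
    set Pf : Option (Finset (Finset E)) → Finset E := fun o => o.elim V infF with hPf
    set cf : Option (Finset (Finset E)) → ℤ :=
      fun o => o.elim (-1) (fun I => (-1)^(I.card+1)) with hcf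
    set idx : Finset (Option (Finset (Finset E))) := insert none (P₁.image some) with hidx
    have hnone : (none : Option (Finset (Finset E))) ∉ P₁.image some := by simp
    have hsome : ∀ o ∈ P₁.image some, ∃ I ∈ P₁, o = some I := by
      intro o ho
      obtain ⟨I, hI, rfl⟩ := Finset.mem_image.1 ho
      exact ⟨I, hI, rfl⟩
    have hP10 : ∀ (x : E), ∑ I ∈ P₁, (-1:ℤ)^(I.card+1) * ind (convexHull ℝ ((infF I : Finset E) : Set E)) x
        = ∑ I ∈ P₀, (-1:ℤ)^(I.card+1) * ind (convexHull ℝ ((infF I : Finset E) : Set E)) x := by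
      intro x
      refine Finset.sum_filter_of_ne ?_
      intro I _ hne0
      by_contra h0
      rw [Finset.not_nonempty_iff_eq_empty] at h0
      rw [h0] at hne0
      simp [ind] at hne0
    have hzero : ∀ x : E, ∑ o ∈ idx, cf o * ind (convexHull ℝ ((Pf o : Finset E) : Set E)) x = 0 := by
      intro x
      rw [hidx, Finset.sum_insert hnone, Finset.sum_image (fun a _ b _ h => Option.some.inj h)]
      have : ∑ I ∈ P₁, cf (some I) * ind (convexHull ℝ ((Pf (some I) : Finset E) : Set E)) x
          = ∑ I ∈ P₁, (-1:ℤ)^(I.card+1) * ind (convexHull ℝ ((infF I : Finset E) : Set E)) x := by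
        refine Finset.sum_congr rfl (fun I _ => rfl)
      rw [this, hP10 x, hpoint x]
      show (-1) * ind (convexHull ℝ (V : Set E)) x + ind (convexHull ℝ (V : Set E)) x = 0
      ring
    have hPne : ∀ o ∈ idx, (Pf o).Nonempty := by
      intro o ho
      rcases Finset.mem_insert.1 ho with rfl | ho'
      · obtain ⟨s₀, hs₀⟩ := hFne
        obtain ⟨x, hx⟩ := hne s₀ hs₀
        exact ⟨x, hsubV s₀ hs₀ hx⟩
      · obtain ⟨I, hI, rfl⟩ := hsome _ ho'
        exact (Finset.mem_filter.1 hI).2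
    have := val_polytope idx Pf hPne cf hzero
    rw [hidx, Finset.sum_insert hnone, Finset.sum_image (fun a _ b _ h => Option.some.inj h)] at this
    have h2 : ∑ I ∈ P₁, cf (some I) = ∑ I ∈ P₁, (-1:ℤ)^(I.card+1) :=
      Finset.sum_congr rfl (fun I _ => rfl)
    rw [h2] at this
    show ∑ I ∈ P₁, (-1:ℤ)^(I.card+1) = 1
    have hc : cf none = -1 := rfl
    rw [hc] at this
    linarith
  -- double counting (nerve has the same Euler characteristic)
  have hA1 : ∀ T ∈ F, ∑ I ∈ P₀, (-1:ℤ)^(I.card+1) * (if T ⊆ infF I then 1 else 0) = 1 := by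
    intro T hT
    set FT : Finset (Finset E) := F.filter (fun s => T ⊆ s) with hFT
    have hfil : P₀.filter (fun I => T ⊆ infF I) = FT.powerset.filter (fun I => I.Nonempty) := by
      ext I
      simp only [hP₀, hFT, Finset.mem_filter, Finset.mem_powerset]
      constructor
      · rintro ⟨⟨hIF, hInem⟩, hTI⟩
        refine ⟨fun s hs => Finset.mem_filter.2 ⟨hIF hs, ?_⟩, hInem⟩
        exact (subset_infF hInem).1 hTI s hs
      · rintro ⟨hIFT, hInem⟩
        refine ⟨⟨fun s hs => (Finset.mem_filter.1 (hIFT hs)).1, hInem⟩, ?_⟩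
        exact (subset_infF hInem).2 (fun s hs => (Finset.mem_filter.1 (hIFT hs)).2)
    simp_rw [mul_ite, mul_one, mul_zero]
    rw [← Finset.sum_filter, hfil]
    exact alt_sum ⟨T, Finset.mem_filter.2 ⟨hT, Finset.Subset.refl T⟩⟩
  have hA2 : ∀ I ∈ P₀, ∑ T ∈ F, (-1:ℤ)^(T.card+1) * (if T ⊆ infF I then 1 else 0)
      = if (infF I).Nonempty then 1 else 0 := by
    intro I hI
    have hIF : I ⊆ F := Finset.mem_powerset.1 (Finset.mem_filter.1 hI).1
    have hInem : I.Nonempty := (Finset.mem_filter.1 hI).2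
    have hFf : F.filter (fun T => T ⊆ infF I)
        = (infF I).powerset.filter (fun T => T.Nonempty) := by
      ext T
      simp only [Finset.mem_filter, Finset.mem_powerset]
      constructor
      · rintro ⟨hTF, hTsub⟩
        exact ⟨hTsub, hne T hTF⟩
      · rintro ⟨hTsub, hTne⟩
        obtain ⟨s₀, hs₀⟩ := id hInem
        have hsubs : infF I ⊆ s₀ := fun x hx => (mem_infF hInem).1 hx s₀ hs₀
        exact ⟨hdown s₀ (hIF hs₀) T (hTsub.trans hsubs) hTne, hTsub⟩
    simp_rw [mul_ite, mul_one, mul_zero]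
    rw [← Finset.sum_filter, hFf]
    by_cases h0 : (infF I).Nonempty
    · rw [if_pos h0, alt_sum h0]
    · rw [if_neg h0]
      rw [Finset.not_nonempty_iff_eq_empty] at h0
      rw [h0]
      simp [Finset.powerset_empty, Finset.filter_singleton]
  calc ∑ T ∈ F, (-1:ℤ)^(T.card+1)
      = ∑ T ∈ F, (-1:ℤ)^(T.card+1) *
          (∑ I ∈ P₀, (-1:ℤ)^(I.card+1) * (if T ⊆ infF I then 1 else 0)) := by
        refine Finset.sum_congr rfl (fun T hT => ?_)
        rw [hA1 T hT, mul_one]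
    _ = ∑ I ∈ P₀, (-1:ℤ)^(I.card+1) *
          (∑ T ∈ F, (-1:ℤ)^(T.card+1) * (if T ⊆ infF I then 1 else 0)) := by
        simp_rw [Finset.mul_sum]
        rw [Finset.sum_comm]
        refine Finset.sum_congr rfl (fun I _ => Finset.sum_congr rfl (fun T _ => by ring))
    _ = ∑ I ∈ P₀, (-1:ℤ)^(I.card+1) * (if (infF I).Nonempty then 1 else 0) := by
        refine Finset.sum_congr rfl (fun I hI => ?_)
        rw [hA2 I hI]
    _ = ∑ I ∈ P₁, (-1:ℤ)^(I.card+1) := by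
        simp_rw [mul_ite, mul_one, mul_zero]
        rw [← Finset.sum_filter, hP₁]
    _ = 1 := hval

end Euler

section ConeGeometry

variable {E : Type*} [AddCommGroup E] [Module ℝ E]

/-- Decomposition of a point of a hull with respect to a distinguished vertex. -/
lemma hull_decomp [DecidableEq E] {G : Finset E} {v : E} (hv : v ∈ G) {z : E}
    (hz : z ∈ convexHull ℝ (G : Set E)) :
    z = v ∨ ∃ (δ : ℝ) (y₀ : E), 0 ≤ δ ∧ δ < 1 ∧ y₀ ∈ convexHull ℝ ((G.erase v : Finset E) : Set E) ∧
      z = δ • v + (1-δ) • y₀ := by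
  obtain ⟨w, hw0, hw1, hwz⟩ := Finset.mem_convexHull'.1 hz
  have hsplit : w v + ∑ y ∈ G.erase v, w y = 1 := by
    rw [Finset.add_sum_erase G w hv]; exact hw1
  by_cases hδ : w v = 1
  · left
    have hrest : ∑ y ∈ G.erase v, w y = 0 := by linarith
    have hall : ∀ y ∈ G.erase v, w y = 0 := by
      intro y hy
      exact (Finset.sum_eq_zero_iff_of_nonneg
        (fun u hu => hw0 u (Finset.mem_of_mem_erase hu))).1 hrest y hy
    have : ∑ y ∈ G, w y • y = w v • v := by
      rw [← Finset.add_sum_erase G (fun y => w y • y) hv]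
      rw [Finset.sum_eq_zero (fun y hy => by rw [hall y hy, zero_smul]), add_zero]
    rw [this, hδ, one_smul] at hwz
    exact hwz.symm
  · right
    have hδle : w v ≤ 1 := by
      have : 0 ≤ ∑ y ∈ G.erase v, w y :=
        Finset.sum_nonneg (fun u hu => hw0 u (Finset.mem_of_mem_erase hu))
      linarith
    have hδlt : w v < 1 := lt_of_le_of_ne hδle hδ
    set σ := 1 - w v with hσ
    have hσpos : 0 < σ := by simp [hσ]; linarith
    refine ⟨w v, σ⁻¹ • ∑ y ∈ G.erase v, w y • y, hw0 v hv, hδlt, ?_, ?_⟩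
    · rw [Finset.mem_convexHull']
      refine ⟨fun y => w y / σ, fun y hy => div_nonneg (hw0 y (Finset.mem_of_mem_erase hy)) hσpos.le,
        ?_, ?_⟩
      · rw [← Finset.sum_div]
        rw [div_eq_one_iff_eq hσpos.ne']
        linarith
      · rw [Finset.smul_sum]
        refine Finset.sum_congr rfl (fun y hy => ?_)
        simp only [smul_smul, div_eq_inv_mul]
    · rw [← hwz, ← Finset.add_sum_erase G (fun y => w y • y) hv]
      rw [smul_smul]
      have : (1 - w v) * σ⁻¹ = 1 := by
        rw [hσ]; field_simp
      rw [this, one_smul]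

/-- The distinguished vertex is not in the affine span of the rest. -/
lemma vertex_not_mem_hull_erase [DecidableEq E] {G : Finset E} {v : E}
    (hG : AffineIndependent ℝ ((↑) : G → E)) (hv : v ∈ G) :
    v ∉ affineSpan ℝ ((G.erase v : Finset E) : Set E) := by
  intro hmem
  have h1 := hG.notMem_affineSpan_diff ⟨v, hv⟩ Set.univ
  apply h1
  have : ((↑) : G → E) '' (Set.univ \ {⟨v, hv⟩}) = ((G.erase v : Finset E) : Set E) := by
    ext x
    constructor
    · rintro ⟨⟨y, hy⟩, ⟨-, hne⟩, rfl⟩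
      refine Finset.mem_coe.2 (Finset.mem_erase.2 ⟨?_, hy⟩)
      intro hxy
      apply hne
      simp only [Set.mem_singleton_iff, Subtype.ext_iff]
      exact hxy
    · intro hx
      obtain ⟨hne, hxG⟩ := Finset.mem_erase.1 (Finset.mem_coe.1 hx)
      exact ⟨⟨x, hxG⟩, ⟨Set.mem_univ _, by simp [Subtype.ext_iff, hne]⟩, rfl⟩
  rwa [this]

lemma no_pos_v_coeff [DecidableEq E] {G : Finset E} {v : E}
    (hG : AffineIndependent ℝ ((↑) : G → E)) (hv : v ∈ G) {z y₀ : E} {δ : ℝ} (hδ : 0 < δ)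
    (hz : z ∈ convexHull ℝ ((G.erase v : Finset E) : Set E))
    (hy₀ : y₀ ∈ convexHull ℝ ((G.erase v : Finset E) : Set E))
    (heq : z = δ • v + (1-δ) • y₀) : False := by
  have hspan : v ∈ affineSpan ℝ ((G.erase v : Finset E) : Set E) := by
    have hz' : z ∈ affineSpan ℝ ((G.erase v : Finset E) : Set E) :=
      convexHull_subset_affineSpan _ hz
    have hy' : y₀ ∈ affineSpan ℝ ((G.erase v : Finset E) : Set E) :=
      convexHull_subset_affineSpan _ hy₀
    have hv' : v = δ⁻¹ • (z -ᵥ y₀) +ᵥ y₀ := by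
      rw [heq]
      show v = δ⁻¹ • (δ • v + (1-δ) • y₀ - y₀) + y₀
      match_scalars <;> field_simp <;> ring
    have hmem2 := AffineSubspace.smul_vsub_vadd_mem (affineSpan ℝ ((G.erase v : Finset E) : Set E))
      δ⁻¹ hz' hy' hy'
    rw [← hv'] at hmem2
    exact hmem2
  exact vertex_not_mem_hull_erase hG hv hspan

lemma v_not_mem_hull_erase [DecidableEq E] {G : Finset E} {v : E}
    (hG : AffineIndependent ℝ ((↑) : G → E)) (hv : v ∈ G) :
    v ∉ convexHull ℝ ((G.erase v : Finset E) : Set E) :=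
  fun hmem => vertex_not_mem_hull_erase hG hv (convexHull_subset_affineSpan _ hmem)

/-- If `z` is in the hull of a common face, and in the hull of `G'` minus `v`,
then `z` is in the hull of the common face minus `v`. -/
lemma coeff_zero_of_mem_erase [DecidableEq E] {G' : Finset E} {v : E}
    (hG' : AffineIndependent ℝ ((↑) : G' → E)) (hv : v ∈ G') {H : Finset E} (hH : H ⊆ G')
    (hvH : v ∈ H) {z : E} (hz1 : z ∈ convexHull ℝ ((H : Finset E) : Set E))
    (hz2 : z ∈ convexHull ℝ ((G'.erase v : Finset E) : Set E)) :
    z ∈ convexHull ℝ ((H.erase v : Finset E) : Set E) := by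
  rcases hull_decomp hvH hz1 with rfl | ⟨δ, y₀, hδ0, hδ1, hy₀, heq⟩
  · exact absurd hz2 (v_not_mem_hull_erase hG' hv)
  · have hy₀' : y₀ ∈ convexHull ℝ ((G'.erase v : Finset E) : Set E) :=
      convexHull_mono (Finset.coe_subset.2 (Finset.erase_subset_erase v hH)) hy₀
    rcases eq_or_lt_of_le hδ0 with hδz | hδpos
    · rw [← hδz, zero_smul, zero_add, sub_zero, one_smul] at heq
      rw [heq]; exact hy₀
    · exact absurd heq (fun heq => no_pos_v_coeff hG' hv hδpos hz2 hy₀' heq)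

/-- Nothing strictly beyond a point of the opposite facet (seen from `v`) is in the simplex. -/
lemma not_beyond [DecidableEq E] {G : Finset E} {v : E}
    (hG : AffineIndependent ℝ ((↑) : G → E)) (hv : v ∈ G) {z : E}
    (hz : z ∈ convexHull ℝ ((G.erase v : Finset E) : Set E)) {s' : ℝ} (hs' : 1 < s')
    (hy : v + s' • (z - v) ∈ convexHull ℝ (G : Set E)) : False := by
  have hs'0 : (0:ℝ) < s' := by linarith
  rcases hull_decomp hv hy with h0 | ⟨β, y₀, hβ0, hβ1, hy₀, heq⟩
  · -- v + s' • (z - v) = v  →  z = v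
    have hzv : z = v := by
      have : s' • (z - v) = 0 := by
        have h1 := congrArg (fun w => w - v) h0
        simpa using h1
      have := smul_eq_zero.1 this
      rcases this with h | h
      · exact absurd h hs'0.ne'
      · rw [sub_eq_zero] at h; exact h
    rw [hzv] at hz
    exact v_not_mem_hull_erase hG hv hz
  · -- z = δ' • v + (1-δ') • y₀ with δ' > 0
    set δ' := 1 - s'⁻¹ * (1-β) with hδ'
    have hδ'pos : 0 < δ' := by
      have h1 : s'⁻¹ < 1 := by
        rw [inv_lt_one_iff₀]; right; exact hs'
      have h2 : s'⁻¹ * (1-β) ≤ s'⁻¹ * 1 := by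
        apply mul_le_mul_of_nonneg_left (by linarith) (by positivity)
      simp only [hδ']
      nlinarith
    refine no_pos_v_coeff hG hv hδ'pos hz hy₀ ?_
    -- z = δ' • v + (1 - δ') • y₀
    have key : v + s' • (z - v) = β • v + (1-β) • y₀ := heq
    have : z = v + s'⁻¹ • ((β • v + (1-β) • y₀) - v) := by
      rw [← key]
      match_scalars <;> field_simp <;> ring
    rw [this, hδ']
    match_scalars <;> field_simp <;> ring

end ConeGeometry

section Projection

variable {E : Type*} [AddCommGroup E] [Module ℝ E]

/-- central projection from `v` onto the hyperplane `ℓ = ℓ v - 1` -/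
noncomputable def pj (ℓ : E →ₗ[ℝ] ℝ) (v : E) (x : E) : E :=
  v + (ℓ v - ℓ x)⁻¹ • (x - v)

lemma cz_pos {c₁ c₂ a b : ℝ} (hc₁ : 0 < c₁) (hc₂ : 0 < c₂) (ha : 0 ≤ a) (hb : 0 ≤ b)
    (hab : a + b = 1) : 0 < a * c₁ + b * c₂ := by
  have hm : 0 < min c₁ c₂ := lt_min hc₁ hc₂
  have h1 : a * min c₁ c₂ ≤ a * c₁ := mul_le_mul_of_nonneg_left (min_le_left _ _) ha
  have h2 : b * min c₁ c₂ ≤ b * c₂ := mul_le_mul_of_nonneg_left (min_le_right _ _) hb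
  nlinarith

lemma pj_combo (ℓ : E →ₗ[ℝ] ℝ) (v : E) {x₁ x₂ : E} (h₁ : ℓ x₁ < ℓ v) (h₂ : ℓ x₂ < ℓ v)
    {a b : ℝ} (ha : 0 ≤ a) (hb : 0 ≤ b) (hab : a + b = 1) :
    pj ℓ v (a • x₁ + b • x₂)
      = (a * (ℓ v - ℓ x₁) / (a * (ℓ v - ℓ x₁) + b * (ℓ v - ℓ x₂))) • pj ℓ v x₁
        + (b * (ℓ v - ℓ x₂) / (a * (ℓ v - ℓ x₁) + b * (ℓ v - ℓ x₂))) • pj ℓ v x₂ := by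
  obtain rfl : b = 1 - a := by linarith
  have hc₁ : 0 < ℓ v - ℓ x₁ := by linarith
  have hc₂ : 0 < ℓ v - ℓ x₂ := by linarith
  have hcz : 0 < a * (ℓ v - ℓ x₁) + (1-a) * (ℓ v - ℓ x₂) := cz_pos hc₁ hc₂ ha hb (by ring)
  have hlz : ℓ (a • x₁ + (1-a) • x₂) = a * ℓ x₁ + (1-a) * ℓ x₂ := by
    simp [map_add, map_smul, smul_eq_mul]
  have hczeq : ℓ v - ℓ (a • x₁ + (1-a) • x₂) = a * (ℓ v - ℓ x₁) + (1-a) * (ℓ v - ℓ x₂) := by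
    rw [hlz]; ring
  unfold pj
  rw [hczeq]
  match_scalars
  · field_simp
    ring
  · field_simp
  · field_simp

lemma pj_combo_forward (ℓ : E →ₗ[ℝ] ℝ) (v : E) {x₁ x₂ : E} (h₁ : ℓ x₁ < ℓ v) (h₂ : ℓ x₂ < ℓ v)
    {a b : ℝ} (ha : 0 ≤ a) (hb : 0 ≤ b) (hab : a + b = 1) :
    ∃ p q : ℝ, 0 ≤ p ∧ 0 ≤ q ∧ p + q = 1 ∧
      pj ℓ v (a • x₁ + b • x₂) = p • pj ℓ v x₁ + q • pj ℓ v x₂ := by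
  have hc₁ : 0 < ℓ v - ℓ x₁ := by linarith
  have hc₂ : 0 < ℓ v - ℓ x₂ := by linarith
  have hcz : 0 < a * (ℓ v - ℓ x₁) + b * (ℓ v - ℓ x₂) := cz_pos hc₁ hc₂ ha hb hab
  refine ⟨_, _, div_nonneg (mul_nonneg ha hc₁.le) hcz.le,
    div_nonneg (mul_nonneg hb hc₂.le) hcz.le, ?_, pj_combo ℓ v h₁ h₂ ha hb hab⟩
  rw [← add_div, div_eq_one_iff_eq hcz.ne']

lemma pj_combo_exists (ℓ : E →ₗ[ℝ] ℝ) (v : E) {x₁ x₂ : E} (h₁ : ℓ x₁ < ℓ v) (h₂ : ℓ x₂ < ℓ v)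
    {p q : ℝ} (hp : 0 ≤ p) (hq : 0 ≤ q) (hpq : p + q = 1) :
    ∃ a b : ℝ, 0 ≤ a ∧ 0 ≤ b ∧ a + b = 1 ∧
      pj ℓ v (a • x₁ + b • x₂) = p • pj ℓ v x₁ + q • pj ℓ v x₂ := by
  have hc₁ : 0 < ℓ v - ℓ x₁ := by linarith
  have hc₂ : 0 < ℓ v - ℓ x₂ := by linarith
  have hD : 0 < p * (ℓ v - ℓ x₂) + q * (ℓ v - ℓ x₁) := cz_pos hc₂ hc₁ hp hq hpq
  have hsum : p * (ℓ v - ℓ x₂) / (p * (ℓ v - ℓ x₂) + q * (ℓ v - ℓ x₁))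
      + q * (ℓ v - ℓ x₁) / (p * (ℓ v - ℓ x₂) + q * (ℓ v - ℓ x₁)) = 1 := by
    rw [← add_div, div_eq_one_iff_eq hD.ne']
  refine ⟨p * (ℓ v - ℓ x₂) / (p * (ℓ v - ℓ x₂) + q * (ℓ v - ℓ x₁)),
    q * (ℓ v - ℓ x₁) / (p * (ℓ v - ℓ x₂) + q * (ℓ v - ℓ x₁)),
    div_nonneg (mul_nonneg hp hc₂.le) hD.le,
    div_nonneg (mul_nonneg hq hc₁.le) hD.le, hsum, ?_⟩
  have h := pj_combo ℓ v h₁ h₂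
    (div_nonneg (mul_nonneg hp hc₂.le) hD.le)
    (div_nonneg (mul_nonneg hq hc₁.le) hD.le) hsum
  have e1 : p * (ℓ v - ℓ x₂) / (p * (ℓ v - ℓ x₂) + q * (ℓ v - ℓ x₁)) * (ℓ v - ℓ x₁)
      + q * (ℓ v - ℓ x₁) / (p * (ℓ v - ℓ x₂) + q * (ℓ v - ℓ x₁)) * (ℓ v - ℓ x₂)
      = (ℓ v - ℓ x₁) * (ℓ v - ℓ x₂) / (p * (ℓ v - ℓ x₂) + q * (ℓ v - ℓ x₁)) := by
    field_simp
    linear_combination hpq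
  have hcc : ((ℓ v - ℓ x₁) * (ℓ v - ℓ x₂) / (p * (ℓ v - ℓ x₂) + q * (ℓ v - ℓ x₁))) ≠ 0 := by
    positivity
  have e2 : p * (ℓ v - ℓ x₂) / (p * (ℓ v - ℓ x₂) + q * (ℓ v - ℓ x₁)) * (ℓ v - ℓ x₁)
      / ((ℓ v - ℓ x₁) * (ℓ v - ℓ x₂) / (p * (ℓ v - ℓ x₂) + q * (ℓ v - ℓ x₁))) = p := by
    field_simp [hc₁.ne', hc₂.ne', hD.ne']
  have e3 : q * (ℓ v - ℓ x₁) / (p * (ℓ v - ℓ x₂) + q * (ℓ v - ℓ x₁)) * (ℓ v - ℓ x₂)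
      / ((ℓ v - ℓ x₁) * (ℓ v - ℓ x₂) / (p * (ℓ v - ℓ x₂) + q * (ℓ v - ℓ x₁))) = q := by
    field_simp [hc₁.ne', hc₂.ne', hD.ne']
  rw [e1, e2, e3] at h
  exact h

lemma pj_image_hull [DecidableEq E] (ℓ : E →ₗ[ℝ] ℝ) (v : E) {t : Finset E}
    (hbel : ∀ u ∈ t, ℓ u < ℓ v) :
    convexHull ℝ ((t.image (pj ℓ v) : Finset E) : Set E) = pj ℓ v '' (convexHull ℝ ↑t) := by
  have hhalf : convexHull ℝ (↑t : Set E) ⊆ {x | ℓ x < ℓ v} :=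
    convexHull_min (fun u hu => hbel u hu) (convex_halfSpace_lt ℓ.isLinear (ℓ v))
  apply Set.Subset.antisymm
  · rw [Finset.coe_image]
    refine convexHull_min (Set.image_mono (subset_convexHull ℝ _)) ?_
    rintro _ ⟨x₁, hx₁, rfl⟩ _ ⟨x₂, hx₂, rfl⟩ p q hp hq hpq
    obtain ⟨a, b, ha, hb, hab, heq⟩ := pj_combo_exists ℓ v (hhalf hx₁) (hhalf hx₂) hp hq hpq
    exact ⟨a • x₁ + b • x₂, convex_convexHull ℝ _ hx₁ hx₂ ha hb hab, heq⟩
  · rintro _ ⟨x, hx, rfl⟩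
    have key : convexHull ℝ (↑t : Set E) ⊆
        {x | pj ℓ v x ∈ convexHull ℝ ((t.image (pj ℓ v) : Finset E) : Set E)}
          ∩ convexHull ℝ (↑t : Set E) := by
      refine convexHull_min ?_ ?_
      · intro u hu
        exact ⟨subset_convexHull ℝ _ (Finset.mem_coe.2 (Finset.mem_image_of_mem _
          (Finset.mem_coe.1 hu))), subset_convexHull ℝ _ hu⟩
      · rintro x₁ ⟨hm₁, hc₁⟩ x₂ ⟨hm₂, hc₂⟩ p q hp hq hpq
        refine ⟨?_, convex_convexHull ℝ _ hc₁ hc₂ hp hq hpq⟩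
        obtain ⟨α, β, hα, hβ, hαβ, heq⟩ :=
          pj_combo_forward ℓ v (hhalf hc₁) (hhalf hc₂) hp hq hpq
        rw [Set.mem_setOf_eq, heq]
        exact convex_convexHull ℝ _ hm₁ hm₂ hα hβ hαβ
    exact (key hx).1

/-- collinearity: `pj` identifies a point with its radial projection -/
lemma pj_ray (ℓ : E →ₗ[ℝ] ℝ) (v : E) {y z : E} {σ : ℝ} (hσ : 0 < σ) (hy : ℓ y < ℓ v)
    (hz : z = (1-σ) • v + σ • y) : pj ℓ v z = pj ℓ v y := by
  have hc : ℓ v - ℓ z = σ * (ℓ v - ℓ y) := by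
    rw [hz]; simp [map_add, map_smul, smul_eq_mul]; ring
  have hcy : 0 < ℓ v - ℓ y := by linarith
  unfold pj
  rw [hc, hz]
  match_scalars <;> (field_simp; try ring)

end Projection

section Chi

open Geometry

lemma chi_complex {E : Type*} [AddCommGroup E] [Module ℝ E] [FiniteDimensional ℝ E]
    [DecidableEq E] (K : Geometry.SimplicialComplex ℝ E) (hfin : K.faces.Finite)
    (hne : K.faces.Nonempty) (hconv : Convex ℝ K.space) :
    ∑ T ∈ hfin.toFinset, (-1:ℤ)^(T.card+1) = 1 := by
  classical
  refine euler_family hfin.toFinset ?_ ?_ ?_ ?_ ?_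
  · obtain ⟨s, hs⟩ := hne
    exact ⟨s, hfin.mem_toFinset.2 hs⟩
  · intro s hs
    rw [hfin.mem_toFinset] at hs
    exact Finset.nonempty_iff_ne_empty.2 (fun h => K.empty_notMem (h ▸ hs))
  · intro s hs t hts htne
    rw [hfin.mem_toFinset] at hs ⊢
    exact K.down_closed hs hts htne
  · intro s hs t ht
    rw [hfin.mem_toFinset] at hs ht
    intro x hx
    have := K.inter_subset_convexHull hs ht hx
    rwa [← Finset.coe_inter] at this
  · have : (⋃ s ∈ hfin.toFinset, convexHull ℝ (s : Set E)) = K.space := by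
      apply Set.Subset.antisymm
      · refine Set.iUnion₂_subset (fun s hs => ?_)
        rw [hfin.mem_toFinset] at hs
        exact K.convexHull_subset_space hs
      · intro x hx
        rw [Geometry.SimplicialComplex.mem_space_iff] at hx
        obtain ⟨s, hs, hxs⟩ := hx
        exact Set.mem_biUnion (hfin.mem_toFinset.2 hs) hxs
    rw [this]
    exact hconv

end Chi

/-- The components of the `f`-vector of a finite geometric simplicial complex, indexed so
that `fVec hfin i = f_{i-1}`, the number of faces with `i` elements; `fVec hfin 0 = 1`,
counting the empty face. -/
noncomputable def fVec {E : Type*} [AddCommGroup E] [Module ℝ E]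
    (K : Geometry.SimplicialComplex ℝ E) (hfin : K.faces.Finite) (i : ℕ) : ℤ :=
  if i = 0 then 1 else ((hfin.toFinset.filter fun s => s.card = i).card : ℤ)

/-- The `h`-vector components of a finite geometric simplicial complex, pure of dimension
`d`: `hVec hfin d k = ∑_{i=0}^{k} (-1)^{k-i} C(d+1-i, d+1-k) f_{i-1}`. -/
noncomputable def hVec {E : Type*} [AddCommGroup E] [Module ℝ E]
    (K : Geometry.SimplicialComplex ℝ E) (hfin : K.faces.Finite) (d k : ℕ) : ℤ :=
  ∑ i ∈ Finset.range (k + 1),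
    (-1 : ℤ) ^ (k - i) * ((d + 1 - i).choose (d + 1 - k)) * fVec K hfin i

/-- Let `K` be a geometric simplicial complex in a finite-dimensional real
vector space `E` with finitely many faces, pure of dimension `d ≥ 1`, whose underlying space
is convex. Suppose `v` is a vertex of `K` contained in every facet of `K` and an extreme
point of the underlying space. Then `h_d(K) = 0` and `h_{d+1}(K) = 0`. -/
theorem h_top_eq_zero_of_pointed {E : Type*} [AddCommGroup E] [Module ℝ E]
    [FiniteDimensional ℝ E] (K : Geometry.SimplicialComplex ℝ E)
    (hfin : K.faces.Finite) (d : ℕ) (hd : 1 ≤ d)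
    (hpure : ∀ s ∈ K.faces, ∃ F ∈ K.faces, s ⊆ F ∧ F.card = d + 1)
    (hconv : Convex ℝ K.space) (v : E) (hv : v ∈ K.vertices)
    (hvfacet : ∀ F ∈ K.faces, F.card = d + 1 → v ∈ F)
    (hext : v ∈ Set.extremePoints ℝ K.space) :
    hVec K hfin d d = 0 ∧ hVec K hfin d (d + 1) = 0 := by
  classical
  have hfaceK : ∀ {T : Finset E}, T ∈ K.faces → T.Nonempty := fun {T} hT =>
    Finset.nonempty_iff_ne_empty.2 (fun h => K.empty_notMem (h ▸ hT))
  have hvface : ({v} : Finset E) ∈ K.faces := hv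
  have hcone : ∀ t ∈ K.faces, insert v t ∈ K.faces := by
    intro t ht
    obtain ⟨F, hF, hsub, hcard⟩ := hpure t ht
    have hvF : v ∈ F := hvfacet F hF hcard
    refine K.down_closed hF (Finset.insert_subset hvF hsub) ?_
    simp
  have hcardle : ∀ T ∈ K.faces, T.card ≤ d + 1 := by
    intro T hT
    obtain ⟨F, hF, hsub, hFc⟩ := hpure T hT
    exact hFc ▸ Finset.card_le_card hsub
  set Ffin : Finset (Finset E) := hfin.toFinset with hFfin
  have hmemF : ∀ {T : Finset E}, T ∈ Ffin ↔ T ∈ K.faces := fun {T} => hfin.mem_toFinset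
  set V : Finset E := Ffin.sup id with hV
  have hTV : ∀ T ∈ K.faces, T ⊆ V := fun T hT => Finset.le_sup (f := id) (hmemF.2 hT)
  have hvV : v ∈ V := hTV {v} hvface (Finset.mem_singleton_self v)
  have hVvert : ∀ u ∈ V, ({u} : Finset E) ∈ K.faces := by
    intro u hu
    rw [hV, Finset.mem_sup] at hu
    obtain ⟨T, hT, huT⟩ := hu
    exact K.down_closed (hmemF.1 hT) (Finset.singleton_subset_iff.2 huT) (by simp)
  have hspace : K.space = convexHull ℝ (V : Set E) := by
    apply Set.Subset.antisymm
    · intro x hx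
      rw [Geometry.SimplicialComplex.mem_space_iff] at hx
      obtain ⟨s, hs, hxs⟩ := hx
      exact convexHull_mono (hTV s hs) hxs
    · refine convexHull_min ?_ hconv
      intro u hu
      exact (K.subset_space (hVvert u hu)) (by simp)
  have hVext : v ∉ convexHull ℝ ((V.erase v : Finset E) : Set E) := by
    intro hvmem
    have hsub2 : convexHull ℝ ((V.erase v : Finset E) : Set E) ⊆ K.space := by
      rw [hspace]
      exact convexHull_mono (Finset.coe_subset.2 (Finset.erase_subset v V))
    have h2 := inter_extremePoints_subset_extremePoints_of_subset hsub2 ⟨hvmem, hext⟩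
    have h3 := extremePoints_convexHull_subset h2
    exact (Finset.mem_erase.1 (Finset.mem_coe.1 h3)).1 rfl
  -- a linear functional exposing `v`
  obtain ⟨ℓ, hℓ⟩ : ∃ ℓ : E →ₗ[ℝ] ℝ, ∀ u ∈ V.erase v, ℓ u < ℓ v := by
    set e := (Module.finBasis ℝ E).equivFun with he
    have himg : (⇑e '' convexHull ℝ ((V.erase v : Finset E) : Set E))
        = convexHull ℝ (⇑e '' ((V.erase v : Finset E) : Set E)) :=
      e.toLinearMap.image_convexHull _
    have hclosed : IsClosed (convexHull ℝ (⇑e '' ((V.erase v : Finset E) : Set E))) :=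
      (((V.erase v).finite_toSet.image e).isCompact_convexHull ℝ).isClosed
    have hnm : e v ∉ convexHull ℝ (⇑e '' ((V.erase v : Finset E) : Set E)) := by
      intro hm
      rw [← himg] at hm
      obtain ⟨y, hy, hye⟩ := hm
      have hyv : y = v := e.injective hye
      rw [hyv] at hy
      exact hVext hy
    obtain ⟨f, u, hfu, hufv⟩ :=
      geometric_hahn_banach_closed_point (convex_convexHull ℝ _) hclosed hnm
    refine ⟨(f : (Fin (Module.finrank ℝ E) → ℝ) →ₗ[ℝ] ℝ).comp e.toLinearMap, ?_⟩
    intro w hw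
    have h1 := hfu (e w) (subset_convexHull ℝ _ ⟨w, hw, rfl⟩)
    show f (e w) < f (e v)
    linarith
  have hℓV : ∀ u ∈ V, u ≠ v → ℓ u < ℓ v :=
    fun u hu hne => hℓ u (Finset.mem_erase.2 ⟨hne, hu⟩)
  -- the antistar of v
  set Lfin : Finset (Finset E) := Ffin.filter (fun t => v ∉ t) with hLfin
  have hmemL : ∀ {t : Finset E}, t ∈ Lfin ↔ t ∈ K.faces ∧ v ∉ t := by
    intro t
    rw [hLfin, Finset.mem_filter, hmemF]
  have hLbel : ∀ t ∈ Lfin, ∀ u ∈ t, ℓ u < ℓ v := by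
    intro t ht u hu
    obtain ⟨htK, hvt⟩ := hmemL.1 ht
    exact hℓV u (hTV t htK hu) (fun h => hvt (h ▸ hu))
  set SL : Set E := ⋃ t ∈ Lfin, convexHull ℝ (t : Set E) with hSL
  have hhalfL : ∀ t ∈ Lfin, convexHull ℝ (t : Set E) ⊆ {x | ℓ x < ℓ v} := fun t ht =>
    convexHull_min (fun u hu => hLbel t ht u hu) (convex_halfSpace_lt ℓ.isLinear (ℓ v))
  have hSLbel : ∀ y ∈ SL, ℓ y < ℓ v := by
    intro y hy
    obtain ⟨t, ht, hyt⟩ := Set.mem_iUnion₂.1 hy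
    exact hhalfL t ht hyt
  have hSLspace : SL ⊆ K.space :=
    Set.iUnion₂_subset fun t ht => K.convexHull_subset_space (hmemL.1 ht).1
  -- radial projection hits the antistar
  have hradial : ∀ z ∈ K.space, z ≠ v → ∃ y ∈ SL, pj ℓ v z = pj ℓ v y := by
    intro z hz hzv
    rw [Geometry.SimplicialComplex.mem_space_iff] at hz
    obtain ⟨s, hs, hzs⟩ := hz
    obtain ⟨F, hF, hsF, hFcard⟩ := hpure s hs
    have hvF : v ∈ F := hvfacet F hF hFcard
    have hzF : z ∈ convexHull ℝ (F : Set E) := convexHull_mono hsF hzs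
    rcases hull_decomp hvF hzF with rfl | ⟨δ, y₀, hδ0, hδ1, hy₀, heq⟩
    · exact absurd rfl hzv
    · have hFev : F.erase v ∈ Lfin := by
        rw [hmemL]
        refine ⟨K.down_closed hF (Finset.erase_subset v F) ?_, Finset.notMem_erase v F⟩
        refine Finset.nonempty_iff_ne_empty.2 fun hempty => ?_
        have hce := Finset.card_erase_of_mem hvF
        rw [hempty, hFcard] at hce
        simp at hce
        omega
      have hy₀SL : y₀ ∈ SL := Set.mem_biUnion hFev hy₀
      refine ⟨y₀, hy₀SL, pj_ray ℓ v (σ := 1 - δ) (by linarith) (hSLbel y₀ hy₀SL) ?_⟩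
      rw [heq]
      module
  -- no point of SL strictly between v and a point of SL
  have hnb : ∀ y ∈ SL, ∀ ρ : ℝ, 0 < ρ → ρ < 1 → v + ρ • (y - v) ∉ SL := by
    intro y hy ρ hρ0 hρ1 hzin
    obtain ⟨t', ht', hzt'⟩ := Set.mem_iUnion₂.1 hzin
    obtain ⟨ht'K, hvt'⟩ := hmemL.1 ht'
    obtain ⟨s, hsL, hys⟩ := Set.mem_iUnion₂.1 hy
    have hsK : s ∈ K.faces := (hmemL.1 hsL).1
    obtain ⟨G, hG, hsG, hGcard⟩ := hpure s hsK
    have hvG : v ∈ G := hvfacet G hG hGcard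
    have hyG : y ∈ convexHull ℝ (G : Set E) := convexHull_mono hsG hys
    have hzG : v + ρ • (y - v) ∈ convexHull ℝ (G : Set E) := by
      have hvG' : v ∈ convexHull ℝ (G : Set E) := subset_convexHull ℝ _ hvG
      have hcc := convex_convexHull ℝ (G : Set E) hvG' hyG
        (by linarith : (0:ℝ) ≤ 1 - ρ) hρ0.le (by ring)
      convert hcc using 1
      module
    have hG'K : insert v t' ∈ K.faces := hcone t' ht'K
    have hG'e : (insert v t').erase v = t' := Finset.erase_insert hvt'
    have hzG'e : v + ρ • (y - v) ∈ convexHull ℝ (((insert v t').erase v : Finset E) : Set E) := by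
      rw [hG'e]
      exact hzt'
    have hzG' : v + ρ • (y - v) ∈ convexHull ℝ ((insert v t' : Finset E) : Set E) :=
      convexHull_mono (Finset.coe_subset.2 (Finset.subset_insert v t')) hzt'
    have hzGG' : v + ρ • (y - v) ∈ convexHull ℝ ((G ∩ insert v t' : Finset E) : Set E) := by
      have hh := K.inter_subset_convexHull hG hG'K ⟨hzG, hzG'⟩
      rwa [← Finset.coe_inter] at hh
    have hvGG' : v ∈ G ∩ insert v t' :=
      Finset.mem_inter.2 ⟨hvG, Finset.mem_insert_self v t'⟩
    have hz2 : v + ρ • (y - v) ∈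
        convexHull ℝ (((G ∩ insert v t').erase v : Finset E) : Set E) :=
      coeff_zero_of_mem_erase (K.indep hG'K) (Finset.mem_insert_self v t')
        Finset.inter_subset_right hvGG' hzGG' hzG'e
    have hz3 : v + ρ • (y - v) ∈ convexHull ℝ ((G.erase v : Finset E) : Set E) :=
      convexHull_mono
        (Finset.coe_subset.2 (Finset.erase_subset_erase v Finset.inter_subset_left)) hz2
    refine not_beyond (K.indep hG) hvG hz3 (s' := ρ⁻¹) ((one_lt_inv₀ hρ0).2 hρ1) ?_
    have hxy : v + ρ⁻¹ • ((v + ρ • (y - v)) - v) = y := by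
      match_scalars <;> field_simp <;> ring
    rw [hxy]
    exact hyG
  -- injectivity of the projection on SL
  have hinj : Set.InjOn (pj ℓ v) SL := by
    have hkey : ∀ y₁ ∈ SL, ∀ y₂ ∈ SL, ℓ y₁ ≤ ℓ y₂ → pj ℓ v y₁ = pj ℓ v y₂ → y₂ = y₁ := by
      intro y₁ h₁ y₂ h₂ hle heq
      have hb₁ := hSLbel y₁ h₁
      have hb₂ := hSLbel y₂ h₂
      have hc₁ : 0 < ℓ v - ℓ y₁ := by linarith
      have hc₂ : 0 < ℓ v - ℓ y₂ := by linarith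
      have heq' : (ℓ v - ℓ y₁)⁻¹ • (y₁ - v) = (ℓ v - ℓ y₂)⁻¹ • (y₂ - v) := by
        have h' := heq
        unfold pj at h'
        exact add_left_cancel h'
      have hy₂eq : y₂ = v + ((ℓ v - ℓ y₂) * (ℓ v - ℓ y₁)⁻¹) • (y₁ - v) := by
        have h2 : (ℓ v - ℓ y₂) • ((ℓ v - ℓ y₁)⁻¹ • (y₁ - v))
            = (ℓ v - ℓ y₂) • ((ℓ v - ℓ y₂)⁻¹ • (y₂ - v)) := by rw [heq']
        rw [smul_smul, smul_smul, mul_inv_cancel₀ hc₂.ne', one_smul] at h2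
        rw [h2]
        module
      have hρpos : 0 < (ℓ v - ℓ y₂) * (ℓ v - ℓ y₁)⁻¹ := by positivity
      have hρle : (ℓ v - ℓ y₂) * (ℓ v - ℓ y₁)⁻¹ ≤ 1 := by
        rw [← div_eq_mul_inv, div_le_one hc₁]
        linarith
      rcases eq_or_lt_of_le hρle with hρ1 | hρlt
      · rw [hy₂eq, hρ1, one_smul]
        module
      · exact absurd (hy₂eq ▸ h₂) (hnb y₁ h₁ _ hρpos hρlt)
    intro y₁ h₁ y₂ h₂ heq
    rcases le_total (ℓ y₁) (ℓ y₂) with h | h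
    · exact (hkey y₁ h₁ y₂ h₂ h heq).symm
    · exact hkey y₂ h₂ y₁ h₁ h heq.symm
  -- vertices of antistar faces lie in SL
  have hvertSL : ∀ t ∈ Lfin, (t : Set E) ⊆ SL := by
    intro t ht u hu
    have h1 : ({u} : Finset E) ∈ Lfin := by
      rw [hmemL]
      obtain ⟨htK, hvt⟩ := hmemL.1 ht
      refine ⟨K.down_closed htK (Finset.singleton_subset_iff.2 hu) (by simp), ?_⟩
      simp only [Finset.mem_singleton]
      intro h
      exact hvt (h ▸ hu)
    exact Set.mem_biUnion h1 (subset_convexHull ℝ _ (by simp))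
  have hhullSL : ∀ t ∈ Lfin, convexHull ℝ (t : Set E) ⊆ SL :=
    fun t ht x hx => Set.mem_biUnion ht hx
  set pmap := pj ℓ v with hpmap
  set Lfin' : Finset (Finset E) := Lfin.image (fun t => t.image pmap) with hLfin'
  have hLne : Lfin.Nonempty := by
    obtain ⟨F, hF, hsub, hFcard⟩ := hpure {v} hvface
    have hvF : v ∈ F := hvfacet F hF hFcard
    refine ⟨F.erase v, ?_⟩
    rw [hmemL]
    refine ⟨K.down_closed hF (Finset.erase_subset v F) ?_, Finset.notMem_erase v F⟩
    refine Finset.nonempty_iff_ne_empty.2 fun hempty => ?_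
    have hce := Finset.card_erase_of_mem hvF
    rw [hempty, hFcard] at hce
    simp at hce
    omega
  have himgL : ∀ t ∈ Lfin, convexHull ℝ ((t.image pmap : Finset E) : Set E)
      = pmap '' (convexHull ℝ (t : Set E)) := fun t ht => pj_image_hull ℓ v (hLbel t ht)
  have hchiL' : ∑ t' ∈ Lfin', (-1:ℤ)^(t'.card+1) = 1 := by
    refine euler_family Lfin' ?_ ?_ ?_ ?_ ?_
    · obtain ⟨t, ht⟩ := hLne
      exact ⟨_, Finset.mem_image_of_mem _ ht⟩
    · intro s' hs'
      obtain ⟨t, ht, rfl⟩ := Finset.mem_image.1 hs'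
      exact (hfaceK ((hmemL.1 ht).1)).image _
    · intro s' hs' u hu hune
      obtain ⟨t, ht, rfl⟩ := Finset.mem_image.1 hs'
      set w := t.filter (fun a => pmap a ∈ u) with hw
      have hwim : w.image pmap = u := by
        apply Finset.Subset.antisymm
        · intro x hx
          obtain ⟨a, ha, rfl⟩ := Finset.mem_image.1 hx
          exact (Finset.mem_filter.1 ha).2
        · intro x hx
          have hxim : x ∈ t.image pmap := hu hx
          obtain ⟨a, ha, rfl⟩ := Finset.mem_image.1 hxim
          exact Finset.mem_image_of_mem _ (Finset.mem_filter.2 ⟨ha, hx⟩)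
      have hwL : w ∈ Lfin := by
        rw [hmemL]
        obtain ⟨htK, hvt⟩ := hmemL.1 ht
        refine ⟨K.down_closed htK (Finset.filter_subset _ _) ?_,
          fun hvw => hvt (Finset.mem_of_mem_filter v hvw)⟩
        refine Finset.nonempty_iff_ne_empty.2 fun hwe => ?_
        rw [hwe] at hwim
        rw [← hwim] at hune
        simp at hune
      rw [← hwim]
      exact Finset.mem_image_of_mem _ hwL
    · intro s' hs' t' ht'
      obtain ⟨s, hs, rfl⟩ := Finset.mem_image.1 hs'
      obtain ⟨t, ht, rfl⟩ := Finset.mem_image.1 ht'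
      have h1 : convexHull ℝ ((s.image pmap : Finset E) : Set E)
            ∩ convexHull ℝ ((t.image pmap : Finset E) : Set E)
          = pmap '' (convexHull ℝ (s : Set E) ∩ convexHull ℝ (t : Set E)) := by
        rw [himgL s hs, himgL t ht]
        exact (hinj.image_inter (hhullSL s hs) (hhullSL t ht)).symm
      rw [h1]
      rintro _ ⟨z, hz, rfl⟩
      have hz2 := K.inter_subset_convexHull (hmemL.1 hs).1 (hmemL.1 ht).1 hz
      rw [← Finset.coe_inter] at hz2
      have h3 : pmap z ∈ convexHull ℝ (((s ∩ t).image pmap : Finset E) : Set E) := by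
        by_cases hstne : (s ∩ t).Nonempty
        · have hstL : s ∩ t ∈ Lfin := by
            rw [hmemL]
            obtain ⟨hsK, hvs⟩ := hmemL.1 hs
            exact ⟨K.down_closed hsK Finset.inter_subset_left
              hstne,
              fun hvm => hvs (Finset.mem_of_mem_inter_left hvm)⟩
          rw [himgL _ hstL]
          exact ⟨z, hz2, rfl⟩
        · rw [Finset.not_nonempty_iff_eq_empty] at hstne
          rw [hstne] at hz2
          simp at hz2
      have h4 : (s ∩ t).image pmap = s.image pmap ∩ t.image pmap := by
        refine Finset.image_inter_of_injOn s t ?_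
        intro a ha b hb hab
        simp only [Finset.coe_union, Set.mem_union, Finset.mem_coe] at ha hb
        have haSL : a ∈ SL := by
          rcases ha with h | h
          exacts [hvertSL s hs h, hvertSL t ht h]
        have hbSL : b ∈ SL := by
          rcases hb with h | h
          exacts [hvertSL s hs h, hvertSL t ht h]
        exact hinj haSL hbSL hab
      rwa [← h4]
    · have hspace' : (⋃ t' ∈ Lfin', convexHull ℝ (t' : Set E)) = pmap '' SL := by
        apply Set.Subset.antisymm
        · refine Set.iUnion₂_subset (fun t' ht' => ?_)
          obtain ⟨t, ht, rfl⟩ := Finset.mem_image.1 ht'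
          rw [himgL t ht]
          exact Set.image_mono (hhullSL t ht)
        · rintro _ ⟨y, hy, rfl⟩
          obtain ⟨t, ht, hyt⟩ := Set.mem_iUnion₂.1 hy
          refine Set.mem_biUnion (Finset.mem_image_of_mem _ ht) ?_
          rw [himgL t ht]
          exact ⟨y, hyt, rfl⟩
      rw [hspace']
      rintro _ ⟨a, ha, rfl⟩ _ ⟨b, hb, rfl⟩ p q hp hq hpq
      obtain ⟨α, β, hα, hβ, hαβ, heq⟩ :=
        pj_combo_exists ℓ v (hSLbel a ha) (hSLbel b hb) hp hq hpq
      have hzK : α • a + β • b ∈ K.space := hconv (hSLspace ha) (hSLspace hb) hα hβ hαβ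
      have hzℓ : ℓ (α • a + β • b) < ℓ v := by
        have hl : ℓ (α • a + β • b) = α * ℓ a + β * ℓ b := by
          simp [map_add, map_smul, smul_eq_mul]
        rw [hl]
        rcases eq_or_lt_of_le hα with h0 | hpos
        · have hβ1 : β = 1 := by linarith
          rw [← h0, hβ1]
          simpa using hSLbel b hb
        · have h1 : α * ℓ a < α * ℓ v := (mul_lt_mul_iff_right₀ hpos).2 (hSLbel a ha)
          have h2 : β * ℓ b ≤ β * ℓ v := mul_le_mul_of_nonneg_left (hSLbel b hb).le hβ
          have h3 : α * ℓ v + β * ℓ v = ℓ v := by linear_combination (ℓ v) * hαβ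
          linarith
      have hzv : α • a + β • b ≠ v := fun h => by rw [h] at hzℓ; linarith
      obtain ⟨y, hySL, hpy⟩ := hradial _ hzK hzv
      rw [← heq]
      show pmap _ ∈ pmap '' SL
      rw [hpy]
      exact ⟨y, hySL, rfl⟩
  have himinj : ∀ x ∈ Lfin, ∀ y ∈ Lfin, x.image pmap = y.image pmap → x = y := by
    have hsub : ∀ x ∈ Lfin, ∀ y ∈ Lfin, x.image pmap = y.image pmap → x ⊆ y := by
      intro x hx y hy hxy a ha
      have : pmap a ∈ y.image pmap := by
        rw [← hxy]
        exact Finset.mem_image_of_mem _ ha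
      obtain ⟨b, hb, hba⟩ := Finset.mem_image.1 this
      have hba' : b = a := hinj (hvertSL y hy hb) (hvertSL x hx ha) hba
      rwa [← hba']
    intro x hx y hy hxy
    exact Finset.Subset.antisymm (hsub x hx y hy hxy) (hsub y hy x hx hxy.symm)
  have hchiL : ∑ t ∈ Lfin, (-1:ℤ)^(t.card+1) = 1 := by
    have h1 : ∑ t' ∈ Lfin', (-1:ℤ)^(t'.card+1) = ∑ t ∈ Lfin, (-1:ℤ)^(t.card+1) := by
      rw [hLfin', Finset.sum_image himinj]
      refine Finset.sum_congr rfl (fun t ht => ?_)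
      rw [Finset.card_image_of_injOn
        (fun a ha b hb hab => hinj (hvertSL t ht ha) (hvertSL t ht hb) hab)]
    rw [← h1]
    exact hchiL'
  have hchiK : ∑ T ∈ Ffin, (-1:ℤ)^(T.card+1) = 1 :=
    chi_complex K hfin ⟨{v}, hvface⟩ hconv
  -- counting
  set cnt : ℕ → ℤ := fun i => ((Ffin.filter (fun T => T.card = i)).card : ℤ) with hcnt
  set cntL : ℕ → ℤ := fun i => ((Lfin.filter (fun t => t.card = i)).card : ℤ) with hcntL
  set N : ℕ → ℤ := fun i => if i = 0 then 1 else cntL i with hN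
  have hLcard : ∀ t ∈ Lfin, t.card ≤ d := by
    intro t ht
    obtain ⟨htK, hvt⟩ := hmemL.1 ht
    obtain ⟨F, hF, hsub, hFc⟩ := hpure t htK
    have hvF : v ∈ F := hvfacet F hF hFc
    have h1 : t ⊆ F.erase v := fun x hx =>
      Finset.mem_erase.2 ⟨fun h => hvt (h ▸ hx), hsub hx⟩
    have h2 := Finset.card_le_card h1
    rw [Finset.card_erase_of_mem hvF, hFc] at h2
    omega
  -- χ(K) in terms of face numbers
  have hKsum : ∑ i ∈ Finset.range (d+1), (-1:ℤ)^i * cnt (i+1) = 1 := by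
    have hmaps : ∀ T ∈ Ffin, T.card - 1 ∈ Finset.range (d+1) := by
      intro T hT
      have := hcardle T (hmemF.1 hT)
      rw [Finset.mem_range]
      omega
    calc ∑ i ∈ Finset.range (d+1), (-1:ℤ)^i * cnt (i+1)
        = ∑ i ∈ Finset.range (d+1), ∑ T ∈ Ffin.filter (fun T => T.card - 1 = i),
            (-1:ℤ)^(T.card+1) := by
          refine Finset.sum_congr rfl (fun i _ => ?_)
          have hfil : Ffin.filter (fun T => T.card - 1 = i)
              = Ffin.filter (fun T => T.card = i + 1) := by
            refine Finset.filter_congr (fun T hT => ?_)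
            have h1 : 1 ≤ T.card := Finset.card_pos.2 (hfaceK (hmemF.1 hT))
            constructor
            · intro h; omega
            · intro h; omega
          rw [hfil]
          rw [Finset.sum_congr rfl (fun T hT => by
            rw [(Finset.mem_filter.1 hT).2] : ∀ T ∈ Ffin.filter (fun T => T.card = i + 1),
              (-1:ℤ)^(T.card+1) = (-1)^(i+1+1))]
          rw [Finset.sum_const, nsmul_eq_mul]
          have hpp : (-1:ℤ)^(i+1+1) = (-1)^i := by
            rw [pow_succ, pow_succ]
            ring
          rw [hpp, hcnt]
          ring
      _ = ∑ T ∈ Ffin, (-1:ℤ)^(T.card+1) := Finset.sum_fiberwise_of_maps_to hmaps _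
      _ = 1 := hchiK
  -- χ(L) in terms of face numbers
  have hLsum : ∑ i ∈ Finset.range d, (-1:ℤ)^i * cntL (i+1) = 1 := by
    have hmaps : ∀ t ∈ Lfin, t.card - 1 ∈ Finset.range d := by
      intro t ht
      have := hLcard t ht
      have h1 : 1 ≤ t.card := Finset.card_pos.2 (hfaceK ((hmemL.1 ht).1))
      rw [Finset.mem_range]
      omega
    calc ∑ i ∈ Finset.range d, (-1:ℤ)^i * cntL (i+1)
        = ∑ i ∈ Finset.range d, ∑ t ∈ Lfin.filter (fun t => t.card - 1 = i),
            (-1:ℤ)^(t.card+1) := by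
          refine Finset.sum_congr rfl (fun i _ => ?_)
          have hfil : Lfin.filter (fun t => t.card - 1 = i)
              = Lfin.filter (fun t => t.card = i + 1) := by
            refine Finset.filter_congr (fun t ht => ?_)
            have h1 : 1 ≤ t.card := Finset.card_pos.2 (hfaceK ((hmemL.1 ht).1))
            constructor
            · intro h; omega
            · intro h; omega
          rw [hfil]
          rw [Finset.sum_congr rfl (fun t ht => by
            rw [(Finset.mem_filter.1 ht).2] : ∀ t ∈ Lfin.filter (fun t => t.card = i + 1),
              (-1:ℤ)^(t.card+1) = (-1)^(i+1+1))]
          rw [Finset.sum_const, nsmul_eq_mul]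
          have hpp : (-1:ℤ)^(i+1+1) = (-1)^i := by
            rw [pow_succ, pow_succ]
            ring
          rw [hpp, hcntL]
          ring
      _ = ∑ t ∈ Lfin, (-1:ℤ)^(t.card+1) := Finset.sum_fiberwise_of_maps_to hmaps _
      _ = 1 := hchiL
  have hNsum : ∑ i ∈ Finset.range (d+1), (-1:ℤ)^i * N i = 0 := by
    rw [Finset.sum_range_succ']
    have h1 : ∑ i ∈ Finset.range d, (-1:ℤ)^(i+1) * N (i+1)
        = - ∑ i ∈ Finset.range d, (-1:ℤ)^i * cntL (i+1) := by
      rw [← Finset.sum_neg_distrib]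
      refine Finset.sum_congr rfl (fun i _ => ?_)
      have : N (i+1) = cntL (i+1) := by simp [hN]
      rw [this, pow_succ]
      ring
    rw [h1, hLsum]
    simp [hN]
  -- the face-count recursion  fVec (i) = N i + N (i-1)
  have hfN : ∀ i : ℕ, 1 ≤ i → fVec K hfin i = N i + N (i-1) := by
    intro i hi
    have hne0 : i ≠ 0 := by omega
    have h1 : fVec K hfin i = cnt i := by
      simp only [fVec, hcnt, if_neg hne0, hFfin]
    have hsplitc : (Ffin.filter (fun T => T.card = i)).card
        = ((Ffin.filter (fun T => T.card = i)).filter (fun T => v ∈ T)).card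
          + ((Ffin.filter (fun T => T.card = i)).filter (fun T => v ∉ T)).card := by
      rw [Finset.card_filter_add_card_filter_not]
    have hC : (Ffin.filter (fun T => T.card = i)).filter (fun T => v ∉ T)
        = Lfin.filter (fun t => t.card = i) := by
      ext T
      simp only [Finset.mem_filter, hLfin]
      tauto
    have hB : (((Ffin.filter (fun T => T.card = i)).filter (fun T => v ∈ T)).card : ℤ)
        = N (i-1) := by
      rcases eq_or_lt_of_le hi with h1' | h2'
      · have hi1 : i = 1 := h1'.symm
        subst hi1
        have hsingle : (Ffin.filter (fun T => T.card = 1)).filter (fun T => v ∈ T) = {{v}} := by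
          ext T
          simp only [Finset.mem_filter, Finset.mem_singleton]
          constructor
          · rintro ⟨⟨hTF, hTc⟩, hvT⟩
            obtain ⟨a, ha⟩ := Finset.card_eq_one.1 hTc
            rw [ha] at hvT ⊢
            rw [Finset.mem_singleton] at hvT
            rw [hvT]
          · rintro rfl
            exact ⟨⟨hmemF.2 hvface, by simp⟩, by simp⟩
        rw [hsingle]
        simp [hN]
      · have hi2 : 2 ≤ i := h2'
        have hcard2 : ((Ffin.filter (fun T => T.card = i)).filter (fun T => v ∈ T)).card
            = (Lfin.filter (fun t => t.card = i - 1)).card := by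
          refine Finset.card_bij (fun T _ => T.erase v) ?_ ?_ ?_
          · intro T hT
            obtain ⟨hT1, hvT⟩ := Finset.mem_filter.1 hT
            obtain ⟨hTF, hTc⟩ := Finset.mem_filter.1 hT1
            show T.erase v ∈ Lfin.filter (fun t => t.card = i - 1)
            refine Finset.mem_filter.2 ⟨?_, ?_⟩
            · rw [hmemL]
              refine ⟨K.down_closed (hmemF.1 hTF) (Finset.erase_subset v T) ?_,
                Finset.notMem_erase v T⟩
              refine Finset.nonempty_iff_ne_empty.2 fun hempty => ?_
              have hce := Finset.card_erase_of_mem hvT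
              rw [hempty] at hce
              simp at hce
              omega
            · rw [Finset.card_erase_of_mem hvT, hTc]
          · intro T₁ hT₁ T₂ hT₂ heq
            have hv₁ : v ∈ T₁ := (Finset.mem_filter.1 hT₁).2
            have hv₂ : v ∈ T₂ := (Finset.mem_filter.1 hT₂).2
            rw [← Finset.insert_erase hv₁, ← Finset.insert_erase hv₂, heq]
          · intro t htL
            obtain ⟨htLf, htc⟩ := Finset.mem_filter.1 htL
            obtain ⟨htK, hvt⟩ := hmemL.1 htLf
            refine ⟨insert v t, ?_, Finset.erase_insert hvt⟩
            refine Finset.mem_filter.2 ⟨Finset.mem_filter.2 ⟨hmemF.2 (hcone t htK), ?_⟩,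
              Finset.mem_insert_self v t⟩
            rw [Finset.card_insert_of_notMem hvt, htc]
            omega
        rw [hcard2, hN]
        have hne1 : i - 1 ≠ 0 := by omega
        simp [hne1, hcntL]
    have hNi : N i = cntL i := by simp [hN, hne0]
    have hC2 : (((Ffin.filter (fun T => T.card = i)).filter (fun T => v ∉ T)).card : ℤ)
        = cntL i := by rw [hC, hcntL]
    rw [h1, hNi]
    have hsum2 : cnt i = (((Ffin.filter (fun T => T.card = i)).filter (fun T => v ∈ T)).card : ℤ)
        + (((Ffin.filter (fun T => T.card = i)).filter (fun T => v ∉ T)).card : ℤ) := by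
      simp only [hcnt]
      exact_mod_cast hsplitc
    rw [hsum2, hB, hC2]
    ring
  -- h_{d+1} = 0
  have hBsum : ∑ i ∈ Finset.range (d+2), (-1:ℤ)^i * fVec K hfin i = 0 := by
    rw [Finset.sum_range_succ']
    have h1 : ∑ i ∈ Finset.range (d+1), (-1:ℤ)^(i+1) * fVec K hfin (i+1)
        = - ∑ i ∈ Finset.range (d+1), (-1:ℤ)^i * cnt (i+1) := by
      rw [← Finset.sum_neg_distrib]
      refine Finset.sum_congr rfl (fun i _ => ?_)
      have h2 : fVec K hfin (i+1) = cnt (i+1) := by simp [fVec, hcnt, hFfin]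
      rw [h2, pow_succ]
      ring
    rw [h1, hKsum]
    simp [fVec]
  have hsgn : ∀ (n i : ℕ), i ≤ n → (-1:ℤ)^(n-i) = (-1)^n * (-1)^i := by
    intro n i hile
    have e1 : (-1:ℤ)^(n-i) * (-1)^i = (-1)^n := by
      rw [← pow_add]
      congr 1
      omega
    have e2 : ((-1:ℤ)^i) * ((-1)^i) = 1 := by
      rw [← pow_add, ← two_mul, pow_mul]
      norm_num
    calc (-1:ℤ)^(n-i) = (-1:ℤ)^(n-i) * (((-1:ℤ)^i) * ((-1)^i)) := by rw [e2, mul_one]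
      _ = ((-1:ℤ)^(n-i) * (-1)^i) * (-1)^i := by ring
      _ = (-1)^n * (-1)^i := by rw [e1]
  have hpart2 : hVec K hfin d (d+1) = 0 := by
    simp only [hVec]
    calc ∑ i ∈ Finset.range (d+1+1),
          (-1:ℤ)^(d+1-i) * ((d+1-i).choose (d+1-(d+1)) : ℤ) * fVec K hfin i
        = ∑ i ∈ Finset.range (d+2), (-1:ℤ)^(d+1) * ((-1:ℤ)^i * fVec K hfin i) := by
          refine Finset.sum_congr rfl (fun i hi => ?_)
          have hch : (d + 1 - i).choose (d + 1 - (d+1)) = 1 := by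
            rw [Nat.sub_self, Nat.choose_zero_right]
          rw [hch]
          have hile : i ≤ d+1 := by rw [Finset.mem_range] at hi; omega
          rw [hsgn (d+1) i hile]
          push_cast
          ring
      _ = (-1:ℤ)^(d+1) * ∑ i ∈ Finset.range (d+2), (-1:ℤ)^i * fVec K hfin i := by
          rw [Finset.mul_sum]
      _ = 0 := by rw [hBsum, mul_zero]
  -- h_d = 0
  have hMdef : ∀ i ∈ Finset.range (d+1), fVec K hfin i
      = N i + (if i = 0 then 0 else N (i-1)) := by
    intro i _
    by_cases h0 : i = 0
    · subst h0
      simp [fVec, hN]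
    · rw [if_neg h0]
      exact hfN i (by omega)
  have hpart1 : hVec K hfin d d = 0 := by
    simp only [hVec]
    have hmain : ∑ i ∈ Finset.range (d+1),
        (-1:ℤ)^i * (((d:ℤ)+1-(i:ℤ)) * fVec K hfin i) = 0 := by
      have hsplit : ∀ i ∈ Finset.range (d+1),
          (-1:ℤ)^i * (((d:ℤ)+1-(i:ℤ)) * fVec K hfin i)
          = (-1:ℤ)^i * (((d:ℤ)+1-(i:ℤ)) * N i)
            + (-1:ℤ)^i * (((d:ℤ)+1-(i:ℤ)) * (if i = 0 then 0 else N (i-1))) := by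
        intro i hi
        rw [hMdef i hi]
        ring
      rw [Finset.sum_congr rfl hsplit, Finset.sum_add_distrib]
      have hT2 : ∑ i ∈ Finset.range (d+1),
          (-1:ℤ)^i * (((d:ℤ)+1-(i:ℤ)) * (if i = 0 then 0 else N (i-1)))
          = ∑ j ∈ Finset.range d, -((-1:ℤ)^j * (((d:ℤ)-(j:ℤ)) * N j)) := by
        rw [Finset.sum_range_succ']
        have hz : (-1:ℤ)^0 * (((d:ℤ)+1-((0:ℕ):ℤ)) * (if (0:ℕ) = 0 then 0 else N (0-1))) = 0 := by
          simp
        rw [hz, add_zero]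
        refine Finset.sum_congr rfl (fun j _ => ?_)
        have hj : (j+1 : ℕ) ≠ 0 := by omega
        rw [if_neg hj]
        simp only [Nat.add_sub_cancel]
        push_cast
        rw [pow_succ]
        ring
      have hT1 : ∑ i ∈ Finset.range (d+1), (-1:ℤ)^i * (((d:ℤ)+1-(i:ℤ)) * N i)
          = ∑ i ∈ Finset.range d, (-1:ℤ)^i * (((d:ℤ)+1-(i:ℤ)) * N i) + (-1:ℤ)^d * N d := by
        rw [Finset.sum_range_succ]
        congr 1
        push_cast
        ring
      rw [hT1, hT2]
      have hcomb : ∑ i ∈ Finset.range d, (-1:ℤ)^i * (((d:ℤ)+1-(i:ℤ)) * N i) + (-1:ℤ)^d * N d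
          + ∑ j ∈ Finset.range d, -((-1:ℤ)^j * (((d:ℤ)-(j:ℤ)) * N j))
          = ∑ i ∈ Finset.range (d+1), (-1:ℤ)^i * N i := by
        rw [Finset.sum_range_succ (f := fun i => (-1:ℤ)^i * N i)]
        have : ∑ i ∈ Finset.range d, (-1:ℤ)^i * (((d:ℤ)+1-(i:ℤ)) * N i)
            + ∑ j ∈ Finset.range d, -((-1:ℤ)^j * (((d:ℤ)-(j:ℤ)) * N j))
            = ∑ i ∈ Finset.range d, (-1:ℤ)^i * N i := by
          rw [← Finset.sum_add_distrib]
          refine Finset.sum_congr rfl (fun i _ => ?_)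
          ring
        linarith [this]
      calc ∑ i ∈ Finset.range d, (-1:ℤ)^i * (((d:ℤ)+1-(i:ℤ)) * N i) + (-1:ℤ)^d * N d
            + ∑ j ∈ Finset.range d, -((-1:ℤ)^j * (((d:ℤ)-(j:ℤ)) * N j))
          = ∑ i ∈ Finset.range (d+1), (-1:ℤ)^i * N i := hcomb
        _ = 0 := hNsum
    calc ∑ i ∈ Finset.range (d+1), (-1:ℤ)^(d-i) * ((d+1-i).choose (d+1-d) : ℤ) * fVec K hfin i
        = ∑ i ∈ Finset.range (d+1), (-1:ℤ)^d * ((-1:ℤ)^i * (((d:ℤ)+1-(i:ℤ)) * fVec K hfin i)) := by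
          refine Finset.sum_congr rfl (fun i hi => ?_)
          have hile : i ≤ d := by rw [Finset.mem_range] at hi; omega
          have hch : d + 1 - d = 1 := by omega
          rw [hch, Nat.choose_one_right]
          have hcasti : ((d+1-i : ℕ) : ℤ) = (d:ℤ)+1-(i:ℤ) := by
            have h3 : i ≤ d + 1 := by omega
            push_cast [Nat.cast_sub h3]
            ring
          rw [hsgn d i hile, hcasti]
          ring
      _ = (-1:ℤ)^d * ∑ i ∈ Finset.range (d+1), (-1:ℤ)^i * (((d:ℤ)+1-(i:ℤ)) * fVec K hfin i) := by
          rw [Finset.mul_sum]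
      _ = 0 := by rw [hmain, mul_zero]
  exact ⟨hpart1, hpart2⟩
end

section
/- Fix natural numbers d ≥ 1 and n ≥ 2, and let k : ℕ → ℤ be any sequence. Define e : ℕ → ℤ by e(i) = Σ_{j=0}^{i+1} k(j) · C(d+1-j, i+1-j). Then Σ_{i=0}^{d} e(i) · C(n-2, i) = Σ_{j=0}^{d+1} k(j) · C(n+d-1-j, d), where C(a,b) denotes the binomial coefficient (interpreted as 0 when b > a). -/
lemma vander_aux (m p q : ℕ) :
    ∑ i ∈ Finset.range (q + 1), m.choose i * p.choose (q - i) = (m + p).choose q := by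
  rw [Nat.add_choose_eq, Finset.Nat.sum_antidiagonal_eq_sum_range_succ_mk]

/-- Fix natural numbers `d ≥ 1` and `n ≥ 2`, and let `k : ℕ → ℤ` be any
sequence. Suppose `e : ℕ → ℤ` satisfies `e i = ∑_{j=0}^{i+1} k j · C(d+1-j, i+1-j)`. Then
`∑_{i=0}^{d} e i · C(n-2, i) = ∑_{j=0}^{d+1} k j · C(n+d-1-j, d)`, where the binomial
coefficient is interpreted as `0` when its lower index exceeds its upper index. -/
theorem interior_sum_identity (d n : ℕ) (hd : 1 ≤ d) (hn : 2 ≤ n) (k e : ℕ → ℤ)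
    (he : ∀ i ≤ d,
      e i = ∑ j ∈ Finset.range (i + 2), k j * ((d + 1 - j).choose (i + 1 - j))) :
    (∑ i ∈ Finset.range (d + 1), e i * ((n - 2).choose i))
      = ∑ j ∈ Finset.range (d + 2), k j * ((n + d - 1 - j).choose d) := by
  have h1 : ∀ i ∈ Finset.range (d + 1), e i * ((n - 2).choose i : ℤ)
      = ∑ j ∈ Finset.range (d + 2),
          k j * ((d + 1 - j).choose (d - i) : ℤ) * ((n - 2).choose i : ℤ) := by
    intro i hi
    rw [Finset.mem_range] at hi
    rw [he i (by omega), Finset.sum_mul]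
    rw [← Finset.sum_subset (Finset.range_subset_range.2 (by omega : i + 2 ≤ d + 2))]
    · apply Finset.sum_congr rfl
      intro j hj
      rw [Finset.mem_range] at hj
      have h2 : (d + 1 - j).choose (i + 1 - j) = (d + 1 - j).choose (d - i) := by
        rw [← Nat.choose_symm (by omega : i + 1 - j ≤ d + 1 - j)]
        congr 1
        omega
      rw [h2]
    · intro j hjd hji
      simp only [Finset.mem_range, not_lt] at hjd hji
      have hz : (d + 1 - j).choose (d - i) = 0 := Nat.choose_eq_zero_of_lt (by omega)
      rw [hz]
      simp
  rw [Finset.sum_congr rfl h1, Finset.sum_comm]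
  apply Finset.sum_congr rfl
  intro j hj
  rw [Finset.mem_range] at hj
  have h3 : ∀ i ∈ Finset.range (d + 1),
      k j * ((d + 1 - j).choose (d - i) : ℤ) * ((n - 2).choose i : ℤ)
        = k j * (((n - 2).choose i * (d + 1 - j).choose (d - i) : ℕ) : ℤ) := by
    intro i _
    push_cast
    ring
  rw [Finset.sum_congr rfl h3, ← Finset.mul_sum, ← Nat.cast_sum, vander_aux]
  have h4 : n - 2 + (d + 1 - j) = n + d - 1 - j := by omega
  rw [h4]
end
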